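/- arXiv:1811.05440 — 5 statements merged into one kernel-verified Lean document; each statement's English description precedes it below -/
import Mathlib

section
/- Let A and B be disjoint nonempty finite sets of integers of sizes a and b. For any bijective words u ∈ S_A and v ∈ S_B, the number of cyclic shuffles of the cyclic equivalence classes [u] and [v] equals (a+b−1)! / ((a−1)!(b−1)!). -/
open Finset

namespace CQSym

/-- The exponent-vector (weight) of a word with letters among the positive
integers: the monomial `x_{w 0} ⋯ x_{w (n-1)}`. -/
noncomputable def wt {n : ℕ} (w : Fin n → ℕ+) : ℕ+ →₀ ℕ := ∑ i, Finsupp.single (w i) 1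

/-- The fundamental quasi-symmetric function `F_{n,J}` for `J ⊆ [n-1]`
(1-based positions): the sum of `x_{w 0} ⋯ x_{w (n-1)}` over weakly increasing
words with a strict ascent at every position of `J`. -/
noncomputable def Fqsym (n : ℕ) (J : Finset ℕ) : MvPowerSeries ℕ+ ℤ :=
  fun d => (Nat.card {w : Fin n → ℕ+ //
    Monotone w ∧ (∀ i : Fin n, (i : ℕ) + 1 ∈ J → w i < w (finRotate n i)) ∧
    wt w = d} : ℤ)

/-- The monomial quasi-symmetric function `M_{n,J}` for `J ⊆ [n-1]`:
the sum over weakly increasing words with a strict ascent exactly at the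
positions of `J`. -/
noncomputable def Mqsym (n : ℕ) (J : Finset ℕ) : MvPowerSeries ℕ+ ℤ :=
  fun d => (Nat.card {w : Fin n → ℕ+ //
    Monotone w ∧
    (∀ i : Fin n, (i : ℕ) + 1 < n → (((i : ℕ) + 1 ∈ J) ↔ w i < w (finRotate n i))) ∧
    wt w = d} : ℤ)

/-- The fundamental cyclic quasi-symmetric function `F^cyc_{n,J}` for
`J ⊆ [n]` (1-based positions): the sum of `x_{w 0} ⋯ x_{w (n-1)}` over pairs
`(w, k)` such that `w` is cyclically weakly increasing from position `k`
and has a (cyclic) strict ascent at every position of `J` except possibly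
at the position just before `k`. -/
noncomputable def cFqsym (n : ℕ) (J : Finset ℕ) : MvPowerSeries ℕ+ ℤ :=
  fun d => (Nat.card {p : (Fin n → ℕ+) × Fin n //
    Monotone (fun i : Fin n => p.1 (p.2 + i)) ∧
    (∀ i : Fin n, (i : ℕ) + 1 ∈ J → i ≠ (finRotate n).symm p.2 →
      p.1 i < p.1 (finRotate n i)) ∧
    wt p.1 = d} : ℤ)

/-- The monomial cyclic quasi-symmetric function `M^cyc_{n,J}` for
`J ⊆ [n]`: the sum of `x_{w 0} ⋯ x_{w (n-1)}` over pairs `(w, k)` such that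
`w` is cyclically weakly increasing from position `k`, the position just
before `k` belongs to `J`, and at every other position the (cyclic) strict
ascents of `w` are exactly the positions of `J`. -/
noncomputable def cMqsym (n : ℕ) (J : Finset ℕ) : MvPowerSeries ℕ+ ℤ :=
  fun d => (Nat.card {p : (Fin n → ℕ+) × Fin n //
    Monotone (fun i : Fin n => p.1 (p.2 + i)) ∧
    (((finRotate n).symm p.2 : Fin n) : ℕ) + 1 ∈ J ∧
    (∀ i : Fin n, i ≠ (finRotate n).symm p.2 →
      (((i : ℕ) + 1 ∈ J) ↔ p.1 i < p.1 (finRotate n i))) ∧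
    wt p.1 = d} : ℤ)

/-- The cyclic shift `J - i` of a subset `J ⊆ [n]`, computed modulo `n`,
with representatives `1, …, n`. -/
def cshift (n : ℕ) (J : Finset ℕ) (i : ℕ) : Finset ℕ :=
  J.image fun j => (j + n - i - 1) % n + 1

/-- The complete homogeneous symmetric function `h_n`: the sum of all
monomials of degree `n`. -/
noncomputable def hqsym (n : ℕ) : MvPowerSeries ℕ+ ℤ :=
  fun d => if d.sum (fun _ e => e) = n then 1 else 0

open scoped Classical in
/-- The elementary symmetric function `e_n`: the sum of all squarefree
monomials of degree `n`. -/
noncomputable def eqsym (n : ℕ) : MvPowerSeries ℕ+ ℤ :=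
  fun d => if d.sum (fun _ e => e) = n ∧ ∀ x, d x ≤ 1 then 1 else 0

/-- The Schur function of hook shape `(n-k, 1^k)`, defined via semistandard
tableaux: a weakly increasing first row of length `n-k`, a strictly
increasing leg of length `k` below its first cell. -/
noncomputable def hookSchur (n k : ℕ) : MvPowerSeries ℕ+ ℤ :=
  fun d => (Nat.card {p : (Fin (n - k) → ℕ+) × (Fin k → ℕ+) //
    Monotone p.1 ∧ StrictMono p.2 ∧
    (∀ (h1 : 0 < n - k) (h2 : 0 < k), p.1 ⟨0, h1⟩ < p.2 ⟨0, h2⟩) ∧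
    wt p.1 + wt p.2 = d} : ℤ)

/-- The descent number of a word with (distinct) integer letters. -/
def des {N : ℕ} (w : Fin N → ℤ) : ℕ :=
  (Finset.univ.filter fun i : Fin N => (i : ℕ) + 1 < N ∧ w (finRotate N i) < w i).card

/-- The cyclic descent number of a word with (distinct) integer letters. -/
def cdes {N : ℕ} (w : Fin N → ℤ) : ℕ :=
  (Finset.univ.filter fun i : Fin N => w (finRotate N i) < w i).card

/-- `w` is a shuffle of `u` and `v`. -/
def IsShuffle {m n : ℕ} (u : Fin m → ℤ) (v : Fin n → ℤ) (w : Fin (m + n) → ℤ) : Prop :=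
  ∃ (f : Fin m → Fin (m + n)) (g : Fin n → Fin (m + n)),
    StrictMono f ∧ StrictMono g ∧ (∀ i, w (f i) = u i) ∧ (∀ j, w (g j) = v j) ∧
    (∀ x, (∃ i, f i = x) ∨ (∃ j, g j = x))

/-- The cyclic class `[w]` is a cyclic shuffle of `[u]` and `[v]`: some
cyclic rotation of `w` is a shuffle of cyclic rotations of `u` and `v`. -/
def IsCyclicShuffle {m n : ℕ} (u : Fin m → ℤ) (v : Fin n → ℤ) (w : Fin (m + n) → ℤ) : Prop :=
  ∃ (kw : Fin (m + n)) (ku : Fin m) (kv : Fin n),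
    IsShuffle (fun i => u (i + ku)) (fun i => v (i + kv)) (fun i => w (i + kw))

/-- Rotation equivalence of words satisfying a property `P`;  `Quot` of this
relation is the set of cyclic equivalence classes. -/
def RotRel {N : ℕ} (P : (Fin N → ℤ) → Prop) (w₁ w₂ : {w : Fin N → ℤ // P w}) : Prop :=
  ∃ k : Fin N, ∀ i, w₁.val i = w₂.val (i + k)

/-- Binomial coefficient with integer upper and lower arguments, zero for
negative lower argument. -/
noncomputable def zchoose (a b : ℤ) : ℤ := if 0 ≤ b then Ring.choose a b.toNat else 0

/-- The map `Ψ`, sending a monomial `x_{i₁}^{m₁} ⋯ x_{i_k}^{m_k}`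
(`i₁ < … < i_k`) to `q^{i_k}`, extended linearly. -/
noncomputable def psi (f : MvPowerSeries ℕ+ ℤ) : PowerSeries ℤ :=
  PowerSeries.mk fun r =>
    if r = 0 then MvPowerSeries.coeff 0 f
    else ∑ᶠ d ∈ {d : ℕ+ →₀ ℕ |
        ∃ m ∈ d.support, (∀ m' ∈ d.support, m' ≤ m) ∧ (m : ℕ) = r},
      MvPowerSeries.coeff d f

/-- The product `⊙` on `ℤ[[q]]` determined by `q^i ⊙ q^j = q^{max(i,j)}`. -/
noncomputable def odot (a b : PowerSeries ℤ) : PowerSeries ℤ :=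
  PowerSeries.mk fun r =>
    (PowerSeries.coeff r a) * (∑ s ∈ Finset.range (r + 1), PowerSeries.coeff s b) +
    (∑ s ∈ Finset.range r, PowerSeries.coeff s a) * (PowerSeries.coeff r b)

/-- A multivariate power series of bounded (total) degree. -/
def BoundedDeg (f : MvPowerSeries ℕ+ ℤ) : Prop :=
  ∃ D, ∀ d : ℕ+ →₀ ℕ, D < d.sum (fun _ e => e) → MvPowerSeries.coeff d f = 0

/-- Cellini's cyclic descent set of a permutation (0-based positions). -/
def cDesF {n : ℕ} (w : Fin n → Fin n) : Finset (Fin n) :=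
  Finset.univ.filter fun i => w (finRotate n i) < w i

/-- The ordinary descent set of a permutation (0-based positions). -/
def DesF {n : ℕ} (w : Fin n → Fin n) : Finset (Fin n) :=
  Finset.univ.filter fun i => (i : ℕ) + 1 < n ∧ w (finRotate n i) < w i

private lemma val_add_one' {N : ℕ} [NeZero N] (x : Fin N) :
    ((x + 1 : Fin N) : ℕ) = if (x : ℕ) + 1 = N then 0 else (x : ℕ) + 1 := by
  have hN := Nat.pos_of_ne_zero (NeZero.ne N)
  have hadd : ((x + 1 : Fin N) : ℕ) = ((x : ℕ) + 1 % N) % N := by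
    rw [Fin.val_add, Fin.val_one']
  rw [hadd]
  rcases Nat.lt_or_ge 1 N with h | h
  · rw [Nat.mod_eq_of_lt h]
    have hx := x.isLt
    split_ifs with he
    · simp [he]
    · exact Nat.mod_eq_of_lt (by omega)
  · have hN1 : N = 1 := by omega
    have hx : (x : ℕ) = 0 := by have := x.isLt; omega
    simp [hN1, hx]

private lemma val_sub_one' {N : ℕ} [NeZero N] (x : Fin N) :
    ((x - 1 : Fin N) : ℕ) = if (x : ℕ) = 0 then N - 1 else (x : ℕ) - 1 := by
  have h := val_add_one' (x - 1)
  rw [sub_add_cancel] at h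
  have hlt := (x - 1).isLt
  have hxlt := x.isLt
  have hN := Nat.pos_of_ne_zero (NeZero.ne N)
  split_ifs at h ⊢ with h1 h2
  all_goals omega

private lemma fin_ne_zero_iff {N : ℕ} [NeZero N] {x : Fin N} : x ≠ 0 ↔ (x : ℕ) ≠ 0 := by
  rw [ne_eq, Fin.ext_iff, Fin.val_zero]

private lemma step_left {a b : ℕ} [NeZero a] [NeZero b] [NeZero (a + b)]
    {u : Fin a → ℤ} {v : Fin b → ℤ} {w : Fin (a + b) → ℤ}
    (hd : ∀ i j, u i ≠ v j) (h : IsShuffle u v w) (h0 : w 0 ∈ Set.range u) :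
    IsShuffle (fun i => u (i + 1)) v (fun x => w (x + 1)) := by
  have hb1 : 1 ≤ b := Nat.pos_of_ne_zero (NeZero.ne b)
  obtain ⟨f, g, hf, hg, hwf, hwg, hcov⟩ := h
  have hg0 : ∀ j, g j ≠ 0 := by
    intro j hj
    obtain ⟨i, hi⟩ := h0
    exact hd i j (by rw [← hwg j, hj, ← hi])
  have hf0 : f 0 = 0 := by
    rcases hcov 0 with ⟨i, hi⟩ | ⟨j, hj⟩
    · exact le_antisymm (hi ▸ hf.monotone (Fin.zero_le i)) (Fin.zero_le _)
    · exact absurd hj (hg0 j)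
  have hfpos : ∀ i : Fin a, i ≠ 0 → 0 < ((f i) : ℕ) := by
    intro i hi
    have h1 : f 0 < f i := hf (by
      rw [Fin.lt_def, Fin.val_zero]
      exact Nat.pos_of_ne_zero (fin_ne_zero_iff.mp hi))
    rw [hf0, Fin.lt_def, Fin.val_zero] at h1
    exact h1
  refine ⟨fun i => f (i + 1) - 1, fun j => g j - 1, ?_, ?_, ?_, ?_, ?_⟩
  · -- strict mono f'
    intro i j hij
    have hijv : (i : ℕ) < (j : ℕ) := hij
    have hja := j.isLt
    have hi1 : ((i + 1 : Fin a) : ℕ) = (i : ℕ) + 1 := by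
      rw [val_add_one', if_neg (by omega)]
    have hi1ne : (i + 1 : Fin a) ≠ 0 := fin_ne_zero_iff.mpr (by omega)
    have hfi := hfpos _ hi1ne
    have hfilt := (f (i + 1)).isLt
    rw [Fin.lt_def, val_sub_one', val_sub_one']
    rcases Nat.lt_or_ge ((j : ℕ) + 1) a with hj1 | hj1
    · have hj1v : ((j + 1 : Fin a) : ℕ) = (j : ℕ) + 1 := by
        rw [val_add_one', if_neg (by omega)]
      have hfij : f (i + 1) < f (j + 1) := hf (by rw [Fin.lt_def, hi1, hj1v]; omega)
      rw [Fin.lt_def] at hfij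
      have hj1ne : (j + 1 : Fin a) ≠ 0 := by
        intro hc; rw [hc, Fin.val_zero] at hj1v; omega
      have hfj : 0 < ((f (j + 1)) : ℕ) := hfpos _ hj1ne
      rw [if_neg (by omega), if_neg (by omega)]
      omega
    · have hj1v : (j + 1 : Fin a) = 0 := by
        rw [Fin.ext_iff, Fin.val_zero, val_add_one', if_pos (by omega)]
      rw [hj1v, hf0, if_neg (by omega), if_pos (by rw [Fin.val_zero])]
      omega
  · -- strict mono g'
    intro i j hij
    have h1 : g i < g j := hg hij
    rw [Fin.lt_def] at h1
    have hi0 := Nat.pos_of_ne_zero (fin_ne_zero_iff.mp (hg0 i))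
    have hj0 := Nat.pos_of_ne_zero (fin_ne_zero_iff.mp (hg0 j))
    rw [Fin.lt_def, val_sub_one', val_sub_one', if_neg (by omega), if_neg (by omega)]
    omega
  · intro i
    show w (f (i + 1) - 1 + 1) = u (i + 1)
    rw [sub_add_cancel, hwf]
  · intro j
    show w (g j - 1 + 1) = v j
    rw [sub_add_cancel, hwg]
  · intro x
    rcases hcov (x + 1) with ⟨i, hi⟩ | ⟨j, hj⟩
    · exact Or.inl ⟨i - 1, by show f (i - 1 + 1) - 1 = x; rw [sub_add_cancel, hi, add_sub_cancel_right]⟩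
    · exact Or.inr ⟨j, by show g j - 1 = x; rw [hj, add_sub_cancel_right]⟩

private lemma step_right {a b : ℕ} [NeZero a] [NeZero b] [NeZero (a + b)]
    {u : Fin a → ℤ} {v : Fin b → ℤ} {w : Fin (a + b) → ℤ}
    (hd : ∀ i j, u i ≠ v j) (h : IsShuffle u v w) (h0 : w 0 ∈ Set.range v) :
    IsShuffle u (fun j => v (j + 1)) (fun x => w (x + 1)) := by
  have ha1 : 1 ≤ a := Nat.pos_of_ne_zero (NeZero.ne a)
  obtain ⟨f, g, hf, hg, hwf, hwg, hcov⟩ := h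
  have hf0' : ∀ i, f i ≠ 0 := by
    intro i hi
    obtain ⟨j, hj⟩ := h0
    exact hd i j (by rw [← hwf i, hi, hj])
  have hg0 : g 0 = 0 := by
    rcases hcov 0 with ⟨i, hi⟩ | ⟨j, hj⟩
    · exact absurd hi (hf0' i)
    · exact le_antisymm (hj ▸ hg.monotone (Fin.zero_le j)) (Fin.zero_le _)
  have hgpos : ∀ j : Fin b, j ≠ 0 → 0 < ((g j) : ℕ) := by
    intro j hj
    have h1 : g 0 < g j := hg (by
      rw [Fin.lt_def, Fin.val_zero]
      exact Nat.pos_of_ne_zero (fin_ne_zero_iff.mp hj))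
    rw [hg0, Fin.lt_def, Fin.val_zero] at h1
    exact h1
  refine ⟨fun i => f i - 1, fun j => g (j + 1) - 1, ?_, ?_, ?_, ?_, ?_⟩
  · intro i j hij
    have h1 : f i < f j := hf hij
    rw [Fin.lt_def] at h1
    have hi0 := Nat.pos_of_ne_zero (fin_ne_zero_iff.mp (hf0' i))
    have hj0 := Nat.pos_of_ne_zero (fin_ne_zero_iff.mp (hf0' j))
    rw [Fin.lt_def, val_sub_one', val_sub_one', if_neg (by omega), if_neg (by omega)]
    omega
  · intro i j hij
    have hijv : (i : ℕ) < (j : ℕ) := hij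
    have hja := j.isLt
    have hi1 : ((i + 1 : Fin b) : ℕ) = (i : ℕ) + 1 := by
      rw [val_add_one', if_neg (by omega)]
    have hi1ne : (i + 1 : Fin b) ≠ 0 := fin_ne_zero_iff.mpr (by omega)
    have hgi := hgpos _ hi1ne
    have hgilt := (g (i + 1)).isLt
    rw [Fin.lt_def, val_sub_one', val_sub_one']
    rcases Nat.lt_or_ge ((j : ℕ) + 1) b with hj1 | hj1
    · have hj1v : ((j + 1 : Fin b) : ℕ) = (j : ℕ) + 1 := by
        rw [val_add_one', if_neg (by omega)]
      have hgij : g (i + 1) < g (j + 1) := hg (by rw [Fin.lt_def, hi1, hj1v]; omega)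
      rw [Fin.lt_def] at hgij
      have hj1ne : (j + 1 : Fin b) ≠ 0 := by
        intro hc; rw [hc, Fin.val_zero] at hj1v; omega
      have hgj : 0 < ((g (j + 1)) : ℕ) := hgpos _ hj1ne
      rw [if_neg (by omega), if_neg (by omega)]
      omega
    · have hj1v : (j + 1 : Fin b) = 0 := by
        rw [Fin.ext_iff, Fin.val_zero, val_add_one', if_pos (by omega)]
      rw [hj1v, hg0, if_neg (by omega), if_pos (by rw [Fin.val_zero])]
      omega
  · intro i
    show w (f i - 1 + 1) = u i
    rw [sub_add_cancel, hwf]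
  · intro j
    show w (g (j + 1) - 1 + 1) = v (j + 1)
    rw [sub_add_cancel, hwg]
  · intro x
    rcases hcov (x + 1) with ⟨i, hi⟩ | ⟨j, hj⟩
    · exact Or.inl ⟨i, by show f i - 1 = x; rw [hi, add_sub_cancel_right]⟩
    · exact Or.inr ⟨j - 1, by show g (j - 1 + 1) - 1 = x; rw [sub_add_cancel, hj, add_sub_cancel_right]⟩


private def ShufR {a b : ℕ} (u : Fin a → ℤ) (v : Fin b → ℤ) (w : Fin (a + b) → ℤ) : Prop :=
  ∃ (ku : Fin a) (kv : Fin b),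
    IsShuffle (fun i => u (i + ku)) (fun j => v (j + kv)) w

private lemma shufR_rot1 {a b : ℕ} [NeZero a] [NeZero b] [NeZero (a + b)]
    {u : Fin a → ℤ} {v : Fin b → ℤ} {w : Fin (a + b) → ℤ}
    (hd : ∀ i j, u i ≠ v j) (h : ShufR u v w) : ShufR u v (fun x => w (x + 1)) := by
  obtain ⟨ku, kv, hsh⟩ := h
  have hd' : ∀ i j, (fun i => u (i + ku)) i ≠ (fun j => v (j + kv)) j := fun i j => hd _ _
  have hcov0 : w 0 ∈ Set.range (fun i => u (i + ku)) ∨ w 0 ∈ Set.range (fun j => v (j + kv)) := by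
    obtain ⟨f, g, hf, hg, hwf, hwg, hcov⟩ := hsh
    rcases hcov 0 with ⟨i, hi⟩ | ⟨j, hj⟩
    · exact Or.inl ⟨i, by rw [← hwf i, hi]⟩
    · exact Or.inr ⟨j, by rw [← hwg j, hj]⟩
  rcases hcov0 with h0 | h0
  · refine ⟨ku + 1, kv, ?_⟩
    have := step_left hd' hsh h0
    have he : (fun i : Fin a => (fun i' : Fin a => u (i' + ku)) (i + 1)) = fun i => u (i + (ku + 1)) := by
      funext i; show u (i + 1 + ku) = u (i + (ku + 1))
      rw [add_assoc, add_comm 1 ku]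
    rwa [he] at this
  · refine ⟨ku, kv + 1, ?_⟩
    have := step_right hd' hsh h0
    have he : (fun j : Fin b => (fun j' : Fin b => v (j' + kv)) (j + 1)) = fun j => v (j + (kv + 1)) := by
      funext j; show v (j + 1 + kv) = v (j + (kv + 1))
      rw [add_assoc, add_comm 1 kv]
    rwa [he] at this

open Fin.NatCast in
private lemma shufR_rotn {a b : ℕ} [NeZero a] [NeZero b] [NeZero (a + b)]
    {u : Fin a → ℤ} {v : Fin b → ℤ}
    (hd : ∀ i j, u i ≠ v j) (k : ℕ) :
    ∀ w : Fin (a + b) → ℤ, ShufR u v w → ShufR u v (fun x => w (x + (k : Fin (a + b)))) := by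
  induction k with
  | zero =>
    intro w hw
    have he : (fun x : Fin (a + b) => w (x + ((0 : ℕ) : Fin (a + b)))) = w := by
      funext x; rw [Nat.cast_zero, add_zero]
    rwa [he]
  | succ k ih =>
    intro w hw
    have h1 := shufR_rot1 hd (ih w hw)
    have he : (fun x : Fin (a + b) => (fun y : Fin (a + b) => w (y + (k : Fin (a + b)))) (x + 1)) =
        fun x => w (x + (((k : ℕ) + 1 : ℕ) : Fin (a + b))) := by
      funext x
      show w (x + 1 + (k : Fin (a + b))) = _
      rw [Nat.cast_add, Nat.cast_one, add_assoc, add_comm 1 (k : Fin (a + b))]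
    rwa [he] at h1

open Fin.NatCast in
private lemma cyc_iff_shufR {a b : ℕ} [NeZero a] [NeZero b] [NeZero (a + b)]
    {u : Fin a → ℤ} {v : Fin b → ℤ}
    (hd : ∀ i j, u i ≠ v j) (w : Fin (a + b) → ℤ) :
    IsCyclicShuffle u v w ↔ ShufR u v w := by
  constructor
  · rintro ⟨kw, ku, kv, hsh⟩
    have h1 : ShufR u v (fun i => w (i + kw)) := ⟨ku, kv, hsh⟩
    have h2 := shufR_rotn hd (a + b - (kw : ℕ)) _ h1
    have hkey : (((a + b - (kw : ℕ) : ℕ)) : Fin (a + b)) + kw = 0 := by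
      have h3 : (((a + b - (kw : ℕ) : ℕ)) : Fin (a + b)) + kw
          = (((a + b - (kw : ℕ) : ℕ)) : Fin (a + b)) + (((kw : ℕ) : ℕ) : Fin (a + b)) := by
        rw [Fin.cast_val_eq_self]
      have h4 : a + b - (kw : ℕ) + (kw : ℕ) = a + b := by
        have := kw.isLt; omega
      rw [h3, ← Nat.cast_add, h4, Fin.natCast_self]
    have he : (fun x : Fin (a + b) => (fun i : Fin (a + b) => w (i + kw)) (x + ((a + b - (kw : ℕ) : ℕ) : Fin (a + b)))) = w := by
      funext x
      show w (x + ((a + b - (kw : ℕ) : ℕ) : Fin (a + b)) + kw) = w x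
      rw [add_assoc, hkey, add_zero]
    rwa [he] at h2
  · rintro ⟨ku, kv, hsh⟩
    refine ⟨0, ku, kv, ?_⟩
    have he : (fun i : Fin (a + b) => w (i + 0)) = w := by
      funext i; rw [add_zero]
    rwa [he]

private lemma shuffle_injective {m n : ℕ} {u : Fin m → ℤ} {v : Fin n → ℤ} {w : Fin (m + n) → ℤ}
    (hu : Function.Injective u) (hv : Function.Injective v) (hd : ∀ i j, u i ≠ v j)
    (h : IsShuffle u v w) : Function.Injective w := by
  obtain ⟨f, g, hf, hg, hwf, hwg, hcov⟩ := h
  intro x y hxy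
  rcases hcov x with ⟨i, hi⟩ | ⟨j, hj⟩ <;> rcases hcov y with ⟨i', hi'⟩ | ⟨j', hj'⟩
  · rw [← hi, ← hi'] at hxy ⊢
    rw [hwf, hwf] at hxy
    rw [hu hxy]
  · exfalso
    rw [← hi, ← hj', hwf, hwg] at hxy
    exact hd _ _ hxy
  · exfalso
    rw [← hj, ← hi', hwg, hwf] at hxy
    exact hd _ _ hxy.symm
  · rw [← hj, ← hj'] at hxy ⊢
    rw [hwg, hwg] at hxy
    rw [hv hxy]

private lemma cyc_injective {a b : ℕ} [NeZero a] [NeZero b] [NeZero (a + b)]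
    {u : Fin a → ℤ} {v : Fin b → ℤ} {w : Fin (a + b) → ℤ}
    (hu : Function.Injective u) (hv : Function.Injective v) (hd : ∀ i j, u i ≠ v j)
    (h : IsCyclicShuffle u v w) : Function.Injective w := by
  obtain ⟨kw, ku, kv, hsh⟩ := h
  have hu' : Function.Injective (fun i : Fin a => u (i + ku)) := by
    intro i j hij
    have := hu hij
    exact add_right_cancel this
  have hv' : Function.Injective (fun j : Fin b => v (j + kv)) := by
    intro i j hij
    have := hv hij
    exact add_right_cancel this
  have h1 : Function.Injective (fun i : Fin (a + b) => w (i + kw)) :=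
    shuffle_injective hu' hv' (fun i j => hd _ _) hsh
  intro x y hxy
  have h2 : (fun i : Fin (a + b) => w (i + kw)) (x - kw) = (fun i : Fin (a + b) => w (i + kw)) (y - kw) := by
    show w (x - kw + kw) = w (y - kw + kw)
    rw [sub_add_cancel, sub_add_cancel, hxy]
  have h3 := h1 h2
  have h4 := congrArg (· + kw) h3
  simpa [sub_add_cancel] using h4

private lemma cyc_rot {a b : ℕ} [NeZero a] [NeZero b] [NeZero (a + b)]
    {u : Fin a → ℤ} {v : Fin b → ℤ} {w : Fin (a + b) → ℤ}
    (k : Fin (a + b)) (h : IsCyclicShuffle u v w) :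
    IsCyclicShuffle u v (fun i => w (i + k)) := by
  obtain ⟨kw, ku, kv, hsh⟩ := h
  refine ⟨kw - k, ku, kv, ?_⟩
  have he : (fun i : Fin (a + b) => (fun x : Fin (a + b) => w (x + k)) (i + (kw - k))) =
      fun i => w (i + kw) := by
    funext i
    show w (i + (kw - k) + k) = w (i + kw)
    rw [add_assoc, sub_add_cancel]
  rwa [he]

private lemma rotRel_equiv {N : ℕ} [NeZero N] (P : (Fin N → ℤ) → Prop) :
    Equivalence (RotRel P) := by
  constructor
  · intro w
    exact ⟨0, fun i => by rw [add_zero]⟩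
  · rintro w₁ w₂ ⟨k, hk⟩
    refine ⟨-k, fun i => ?_⟩
    rw [hk (i + -k), add_assoc, neg_add_cancel, add_zero]
  · rintro w₁ w₂ w₃ ⟨k, hk⟩ ⟨k', hk'⟩
    refine ⟨k + k', fun i => ?_⟩
    rw [hk i, hk' (i + k), add_assoc]


private noncomputable def wordOf {a b : ℕ} (u : Fin a → ℤ) (v : Fin b → ℤ)
    (S : Finset (Fin (a + b))) (hS : S.card = a) (hSc : Sᶜ.card = b)
    (ku : Fin a) (kv : Fin b) : Fin (a + b) → ℤ :=
  fun x => if hx : x ∈ S then u ((S.orderIsoOfFin hS).symm ⟨x, hx⟩ + ku)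
  else v ((Sᶜ.orderIsoOfFin hSc).symm ⟨x, Finset.mem_compl.mpr hx⟩ + kv)

private lemma wordOf_isShuffle {a b : ℕ} (u : Fin a → ℤ) (v : Fin b → ℤ)
    (S : Finset (Fin (a + b))) (hS : S.card = a) (hSc : Sᶜ.card = b)
    (ku : Fin a) (kv : Fin b) :
    IsShuffle (fun i => u (i + ku)) (fun j => v (j + kv)) (wordOf u v S hS hSc ku kv) := by
  refine ⟨fun i => S.orderEmbOfFin hS i, fun j => Sᶜ.orderEmbOfFin hSc j,
    (S.orderEmbOfFin hS).strictMono, (Sᶜ.orderEmbOfFin hSc).strictMono, ?_, ?_, ?_⟩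
  · intro i
    have hm : S.orderEmbOfFin hS i ∈ S := Finset.orderEmbOfFin_mem S hS i
    show wordOf u v S hS hSc ku kv _ = u (i + ku)
    rw [wordOf, dif_pos hm]
    have h1 : (S.orderIsoOfFin hS) i = ⟨S.orderEmbOfFin hS i, hm⟩ :=
      Subtype.ext (Finset.coe_orderIsoOfFin_apply S hS i)
    rw [← h1, OrderIso.symm_apply_apply]
  · intro j
    have hm : Sᶜ.orderEmbOfFin hSc j ∈ Sᶜ := Finset.orderEmbOfFin_mem Sᶜ hSc j
    have hm' : Sᶜ.orderEmbOfFin hSc j ∉ S := Finset.mem_compl.mp hm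
    show wordOf u v S hS hSc ku kv _ = v (j + kv)
    rw [wordOf, dif_neg hm']
    have h1 : (Sᶜ.orderIsoOfFin hSc) j = ⟨Sᶜ.orderEmbOfFin hSc j, hm⟩ :=
      Subtype.ext (Finset.coe_orderIsoOfFin_apply Sᶜ hSc j)
    rw [← h1, OrderIso.symm_apply_apply]
  · intro x
    by_cases hx : x ∈ S
    · refine Or.inl ⟨(S.orderIsoOfFin hS).symm ⟨x, hx⟩, ?_⟩
      show (S.orderEmbOfFin hS) _ = x
      rw [← Finset.coe_orderIsoOfFin_apply, OrderIso.apply_symm_apply]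
    · refine Or.inr ⟨(Sᶜ.orderIsoOfFin hSc).symm ⟨x, Finset.mem_compl.mpr hx⟩, ?_⟩
      show (Sᶜ.orderEmbOfFin hSc) _ = x
      rw [← Finset.coe_orderIsoOfFin_apply, OrderIso.apply_symm_apply]

private lemma wordOf_inj {a b : ℕ} [NeZero a] [NeZero b] {u : Fin a → ℤ} {v : Fin b → ℤ}
    (hu : Function.Injective u) (hv : Function.Injective v) (hd : ∀ i j, u i ≠ v j)
    {S S' : Finset (Fin (a + b))} {hS : S.card = a} {hS' : S'.card = a}
    {hSc : Sᶜ.card = b} {hSc' : S'ᶜ.card = b} {ku ku' : Fin a} {kv kv' : Fin b}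
    (h : wordOf u v S hS hSc ku kv = wordOf u v S' hS' hSc' ku' kv') :
    S = S' ∧ ku = ku' ∧ kv = kv' := by
  have hSS : S = S' := by
    ext x
    constructor
    · intro hx
      by_contra hx'
      have h1 := congrFun h x
      rw [wordOf, wordOf] at h1
      rw [dif_pos hx, dif_neg hx'] at h1
      exact hd _ _ h1
    · intro hx
      by_contra hx'
      have h1 := congrFun h x
      rw [wordOf, wordOf] at h1
      rw [dif_neg hx', dif_pos hx] at h1
      exact hd _ _ h1.symm
  subst hSS
  refine ⟨rfl, ?_, ?_⟩
  · have hm : S.orderEmbOfFin hS (0 : Fin a) ∈ S := Finset.orderEmbOfFin_mem S hS _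
    have h1 := congrFun h (S.orderEmbOfFin hS (0 : Fin a))
    rw [wordOf, wordOf] at h1
    rw [dif_pos hm, dif_pos hm] at h1
    have h2 := hu h1
    exact add_left_cancel h2
  · have hm : Sᶜ.orderEmbOfFin hSc (0 : Fin b) ∈ Sᶜ := Finset.orderEmbOfFin_mem Sᶜ hSc _
    have hm' : Sᶜ.orderEmbOfFin hSc (0 : Fin b) ∉ S := Finset.mem_compl.mp hm
    have h1 := congrFun h (Sᶜ.orderEmbOfFin hSc (0 : Fin b))
    rw [wordOf, wordOf] at h1
    rw [dif_neg hm', dif_neg hm'] at h1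
    have h2 := hv h1
    exact add_left_cancel h2

private lemma isShuffle_eq_wordOf {a b : ℕ} [NeZero a] [NeZero b] {u : Fin a → ℤ} {v : Fin b → ℤ}
    (hd : ∀ i j, u i ≠ v j) {w : Fin (a + b) → ℤ} {ku : Fin a} {kv : Fin b}
    (h : IsShuffle (fun i => u (i + ku)) (fun j => v (j + kv)) w) :
    ∃ (S : Finset (Fin (a + b))) (hS : S.card = a) (hSc : Sᶜ.card = b),
      w = wordOf u v S hS hSc ku kv := by
  obtain ⟨f, g, hf, hg, hwf, hwg, hcov⟩ := h
  simp only [] at hwf hwg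
  set S : Finset (Fin (a + b)) := Finset.univ.map ⟨f, hf.injective⟩ with hSdef
  have hS : S.card = a := by simp [hSdef]
  have hSc : Sᶜ.card = b := by
    rw [Finset.card_compl, hS, Fintype.card_fin]; omega
  have hmemS : ∀ x, x ∈ S ↔ ∃ i, f i = x := by
    intro x; simp [hSdef]
  have hfS : ∀ i, f i ∈ S := fun i => (hmemS _).mpr ⟨i, rfl⟩
  have hfe : f = ⇑(S.orderEmbOfFin hS) := Finset.orderEmbOfFin_unique hS hfS hf
  have hgS : ∀ j, g j ∈ Sᶜ := by
    intro j
    rw [Finset.mem_compl]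
    intro hj
    obtain ⟨i, hi⟩ := (hmemS _).mp hj
    exact hd (i + ku) (j + kv) (by rw [← hwf i, ← hwg j, hi])
  have hge : g = ⇑(Sᶜ.orderEmbOfFin hSc) := Finset.orderEmbOfFin_unique hSc hgS hg
  refine ⟨S, hS, hSc, ?_⟩
  funext x
  by_cases hx : x ∈ S
  · obtain ⟨i, hi⟩ := (hmemS x).mp hx
    rw [wordOf, dif_pos hx]
    have h1 : (S.orderIsoOfFin hS) i = ⟨x, hx⟩ := by
      apply Subtype.ext
      rw [Finset.coe_orderIsoOfFin_apply, ← congrFun hfe i, hi]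
    rw [← h1, OrderIso.symm_apply_apply, ← hi, hwf]
  · have hxc : x ∈ Sᶜ := Finset.mem_compl.mpr hx
    obtain ⟨j, hj⟩ : ∃ j, g j = x := by
      rcases hcov x with ⟨i, hi⟩ | hj
      · exact absurd ((hmemS x).mpr ⟨i, hi⟩) hx
      · exact hj
    rw [wordOf, dif_neg hx]
    have h1 : (Sᶜ.orderIsoOfFin hSc) j = ⟨x, hxc⟩ := by
      apply Subtype.ext
      rw [Finset.coe_orderIsoOfFin_apply, ← congrFun hge j, hj]
    rw [← h1, OrderIso.symm_apply_apply, ← hj, hwg]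


private noncomputable def Fmap {a b : ℕ} [NeZero a] [NeZero b] [NeZero (a + b)]
    (u : Fin a → ℤ) (v : Fin b → ℤ)
    (c : Quot (RotRel (IsCyclicShuffle u v)) × Fin (a + b)) :
    {w : Fin (a + b) → ℤ // IsCyclicShuffle u v w} :=
  ⟨fun i => (Quot.out c.1).val (i + c.2), cyc_rot c.2 (Quot.out c.1).2⟩

private lemma Fmap_bijective {a b : ℕ} [NeZero a] [NeZero b] [NeZero (a + b)]
    (u : Fin a → ℤ) (v : Fin b → ℤ)
    (hu : Function.Injective u) (hv : Function.Injective v) (hd : ∀ i j, u i ≠ v j) :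
    Function.Bijective (Fmap u v) := by
  constructor
  · rintro ⟨c, k⟩ ⟨c', k'⟩ hcc
    have h := congrArg Subtype.val hcc
    simp only [Fmap] at h
    have hrel : RotRel (IsCyclicShuffle u v) (Quot.out c) (Quot.out c') := by
      refine ⟨k' - k, fun i => ?_⟩
      have h2 := congrFun h (i - k)
      rw [sub_add_cancel] at h2
      rw [h2, sub_add_eq_add_sub, add_sub_assoc]
    have hc : c = c' := by
      have := Quot.sound hrel
      rwa [Quot.out_eq, Quot.out_eq] at this
    subst hc
    have hk : k = k' := by
      have h2 := congrFun h 0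
      rw [zero_add, zero_add] at h2
      exact cyc_injective hu hv hd (Quot.out c).2 h2
    subst hk
    rfl
  · rintro ⟨w, hw⟩
    have h1 : Quot.mk (RotRel (IsCyclicShuffle u v))
        (Quot.out (Quot.mk (RotRel (IsCyclicShuffle u v)) ⟨w, hw⟩))
        = Quot.mk (RotRel (IsCyclicShuffle u v)) ⟨w, hw⟩ := Quot.out_eq _
    have hrel : RotRel (IsCyclicShuffle u v)
        (Quot.out (Quot.mk (RotRel (IsCyclicShuffle u v)) ⟨w, hw⟩)) ⟨w, hw⟩ :=
      ((rotRel_equiv (IsCyclicShuffle u v)).eqvGen_iff).mp (Quot.eqvGen_exact h1)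
    obtain ⟨k, hk⟩ := hrel
    refine ⟨(Quot.mk (RotRel (IsCyclicShuffle u v)) ⟨w, hw⟩, -k), ?_⟩
    apply Subtype.ext
    funext i
    show (Quot.out (Quot.mk (RotRel (IsCyclicShuffle u v)) ⟨w, hw⟩)).val (i + -k) = w i
    rw [hk (i + -k), add_assoc, neg_add_cancel, add_zero]

private noncomputable def Emap {a b : ℕ} [NeZero a] [NeZero b] [NeZero (a + b)]
    (u : Fin a → ℤ) (v : Fin b → ℤ) (hd : ∀ i j, u i ≠ v j)
    (t : {S : Finset (Fin (a + b)) // S.card = a} × Fin a × Fin b) :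
    {w : Fin (a + b) → ℤ // IsCyclicShuffle u v w} :=
  ⟨wordOf u v t.1.1 t.1.2 (by rw [Finset.card_compl, t.1.2, Fintype.card_fin]; omega) t.2.1 t.2.2,
   (cyc_iff_shufR hd _).mpr ⟨t.2.1, t.2.2, wordOf_isShuffle u v _ _ _ _ _⟩⟩

private lemma Emap_bijective {a b : ℕ} [NeZero a] [NeZero b] [NeZero (a + b)]
    (u : Fin a → ℤ) (v : Fin b → ℤ)
    (hu : Function.Injective u) (hv : Function.Injective v) (hd : ∀ i j, u i ≠ v j) :
    Function.Bijective (Emap u v hd) := by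
  constructor
  · rintro ⟨⟨S, hSp⟩, ku, kv⟩ ⟨⟨S', hSp'⟩, ku', kv'⟩ h
    have h1 := congrArg Subtype.val h
    simp only [Emap] at h1
    obtain ⟨hSS, hku, hkv⟩ := wordOf_inj hu hv hd h1
    subst hSS; subst hku; subst hkv
    rfl
  · rintro ⟨w, hw⟩
    obtain ⟨ku, kv, hsh⟩ := (cyc_iff_shufR hd w).mp hw
    obtain ⟨S, hS, hSc, hweq⟩ := isShuffle_eq_wordOf hd hsh
    exact ⟨⟨⟨S, hS⟩, ku, kv⟩, Subtype.ext hweq.symm⟩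



/-- The number of cyclic shuffles of `[u]` and `[v]`, for bijective words
`u`, `v` on disjoint nonempty finite sets of integers of sizes `a`, `b`,
is `(a+b−1)! / ((a−1)!(b−1)!)`. -/
theorem num_cyclic_shuffles (a b : ℕ) (ha : 0 < a) (hb : 0 < b)
    (u : Fin a → ℤ) (v : Fin b → ℤ)
    (hu : Function.Injective u) (hv : Function.Injective v)
    (hdisj : ∀ i j, u i ≠ v j) :
    Nat.card (Quot (RotRel (IsCyclicShuffle u v)))
      = (a + b - 1).factorial / ((a - 1).factorial * (b - 1).factorial) := by
  haveI : NeZero a := ⟨by omega⟩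
  haveI : NeZero b := ⟨by omega⟩
  haveI : NeZero (a + b) := ⟨by omega⟩
  have e1 : Nat.card ({S : Finset (Fin (a + b)) // S.card = a} × Fin a × Fin b)
      = Nat.card {w : Fin (a + b) → ℤ // IsCyclicShuffle u v w} :=
    Nat.card_eq_of_bijective _ (Emap_bijective u v hu hv hdisj)
  have e2 : Nat.card (Quot (RotRel (IsCyclicShuffle u v)) × Fin (a + b))
      = Nat.card {w : Fin (a + b) → ℤ // IsCyclicShuffle u v w} :=
    Nat.card_eq_of_bijective _ (Fmap_bijective u v hu hv hdisj)
  have c1 : Nat.card ({S : Finset (Fin (a + b)) // S.card = a} × Fin a × Fin b)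
      = (a + b).choose a * (a * b) := by
    rw [Nat.card_prod, Nat.card_prod]
    rw [Nat.card_eq_fintype_card, Nat.card_eq_fintype_card, Nat.card_eq_fintype_card]
    rw [Fintype.card_finset_len, Fintype.card_fin, Fintype.card_fin, Fintype.card_fin]
  have c2 : Nat.card (Quot (RotRel (IsCyclicShuffle u v)) × Fin (a + b))
      = Nat.card (Quot (RotRel (IsCyclicShuffle u v))) * (a + b) := by
    rw [Nat.card_prod, Nat.card_eq_fintype_card (α := Fin (a + b)), Fintype.card_fin]
  have key : Nat.card (Quot (RotRel (IsCyclicShuffle u v))) * (a + b)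
      = (a + b).choose a * (a * b) := by
    rw [← c2, e2, ← e1, c1]
  have hmain : Nat.card (Quot (RotRel (IsCyclicShuffle u v)))
      * ((a - 1).factorial * (b - 1).factorial) = (a + b - 1).factorial := by
    apply Nat.eq_of_mul_eq_mul_right (show 0 < a + b by omega)
    calc Nat.card (Quot (RotRel (IsCyclicShuffle u v)))
          * ((a - 1).factorial * (b - 1).factorial) * (a + b)
        = (Nat.card (Quot (RotRel (IsCyclicShuffle u v))) * (a + b))
          * ((a - 1).factorial * (b - 1).factorial) := by ring
      _ = ((a + b).choose a * (a * b)) * ((a - 1).factorial * (b - 1).factorial) := by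
          rw [key]
      _ = (a + b).choose a * (a * (a - 1).factorial) * (b * (b - 1).factorial) := by ring
      _ = (a + b).choose a * a.factorial * b.factorial := by
          rw [Nat.mul_factorial_pred ha.ne', Nat.mul_factorial_pred hb.ne']
      _ = (a + b).factorial := by
          have h := Nat.choose_mul_factorial_mul_factorial (show a ≤ a + b by omega)
          rwa [Nat.add_sub_cancel_left] at h
      _ = (a + b - 1).factorial * (a + b) := by
          rw [← Nat.mul_factorial_pred (show a + b ≠ 0 by omega)]; ring
  rw [← hmain, Nat.mul_div_cancel _ (Nat.mul_pos (Nat.factorial_pos _) (Nat.factorial_pos _))]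


end CQSym
end

section
/- For nonnegative integers m, n and arbitrary integers x, y, one has Σ_ℓ C(m−x+y, ℓ)·C(n+x−y, n−ℓ)·C(x+ℓ, m+n) = C(x, m)·C(y, n), where the sum is over 0 ≤ ℓ ≤ n. -/
open Finset

namespace CQSym

private lemma PS_tri (r : ℤ) {K M : ℕ} (h : K ≤ M) :
    (Nat.choose M K : ℤ) * Ring.choose r M
      = Ring.choose r K * Ring.choose (r - (K : ℤ)) (M - K) := by
  have := Ring.choose_smul_choose r h
  rwa [nsmul_eq_mul] at this

private lemma PS_rev (r : ℤ) (a b : ℕ) :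
    Ring.choose r a * Ring.choose (r - (a : ℤ)) b
      = Ring.choose r b * Ring.choose (r - (b : ℤ)) a := by
  have h1 := PS_tri r (Nat.le_add_right a b)
  have h2 := PS_tri r (Nat.le_add_left b a)
  rw [Nat.add_sub_cancel_left] at h1
  rw [Nat.add_sub_cancel] at h2
  have hsym : (Nat.choose (a + b) a : ℤ) = (Nat.choose (a + b) b : ℤ) := by
    have : Nat.choose (a + b) a = Nat.choose (a + b) b := by
      rw [← Nat.choose_symm (Nat.le_add_right a b)]
      congr 1
      omega
    exact_mod_cast this
  rw [← h1, hsym, h2]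

private lemma PS_vand (r s : ℤ) (N : ℕ) :
    ∑ t ∈ Finset.range (N + 1), Ring.choose r t * Ring.choose s (N - t)
      = Ring.choose (r + s) N := by
  rw [Ring.add_choose_eq N (Commute.all r s),
    Finset.Nat.sum_antidiagonal_eq_sum_range_succ_mk]

/-- The Pfaff–Saalschütz identity (GKP (5.28)):
`Σ_ℓ C(m−x+y, ℓ) C(n+x−y, n−ℓ) C(x+ℓ, m+n) = C(x, m) C(y, n)`. -/
theorem pfaff_saalschuetz (m n : ℕ) (x y : ℤ) :
    ∑ ℓ ∈ Finset.range (n + 1),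
        Ring.choose ((m : ℤ) - x + y) ℓ * Ring.choose ((n : ℤ) + x - y) (n - ℓ) *
          Ring.choose (x + (ℓ : ℤ)) (m + n)
      = Ring.choose x m * Ring.choose y n := by
  set A := (m : ℤ) - x + y with hA
  set B := (n : ℤ) + x - y with hB
  have hx : ∀ ℓ : ℕ, Ring.choose (x + (ℓ : ℤ)) (m + n)
      = ∑ j ∈ range (m + n + 1), Ring.choose x (m + n - j) * (Nat.choose ℓ j : ℤ) := by
    intro ℓ
    rw [Ring.add_choose_eq _ (Commute.all _ _),
      Finset.Nat.sum_antidiagonal_eq_sum_range_succ_mk, ← Finset.sum_range_reflect]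
    apply Finset.sum_congr rfl
    intro j hj
    have hj' : j ≤ m + n := by simpa [Nat.lt_succ_iff] using hj
    have e1 : m + n + 1 - 1 - j = m + n - j := by omega
    have e2 : m + n - (m + n - j) = j := by omega
    rw [e1, e2, Ring.choose_natCast]
  have hJ0 : ∀ j : ℕ, n < j →
      ∑ ℓ ∈ range (n + 1),
        Ring.choose A ℓ * Ring.choose B (n - ℓ) * (Nat.choose ℓ j : ℤ) = 0 := by
    intro j hj
    apply Finset.sum_eq_zero
    intro ℓ hℓ
    rw [Nat.choose_eq_zero_of_lt (by simp only [Finset.mem_range] at hℓ; omega)]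
    simp
  have hJ : ∀ j : ℕ, j ≤ n →
      ∑ ℓ ∈ range (n + 1),
          Ring.choose A ℓ * Ring.choose B (n - ℓ) * (Nat.choose ℓ j : ℤ)
        = Ring.choose A j * (Nat.choose (m + n - j) (n - j) : ℤ) := by
    intro j hj
    have h1 : ∑ ℓ ∈ range (n + 1),
        Ring.choose A ℓ * Ring.choose B (n - ℓ) * (Nat.choose ℓ j : ℤ)
        = ∑ ℓ ∈ Finset.Ico j (n + 1),
        Ring.choose A ℓ * Ring.choose B (n - ℓ) * (Nat.choose ℓ j : ℤ) := by
      refine (Finset.sum_subset ?_ ?_).symm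
      · intro ℓ hℓ
        simp only [Finset.mem_Ico] at hℓ
        simp only [Finset.mem_range]
        omega
      · intro ℓ hℓ h2
        simp only [Finset.mem_range] at hℓ
        simp only [Finset.mem_Ico] at h2
        rw [Nat.choose_eq_zero_of_lt (by omega)]
        push_cast
        ring
    rw [h1, Finset.sum_Ico_eq_sum_range]
    have h2 : n + 1 - j = (n - j) + 1 := by omega
    rw [h2]
    have h3 : ∀ t ∈ range (n - j + 1),
        Ring.choose A (j + t) * Ring.choose B (n - (j + t)) * (Nat.choose (j + t) j : ℤ)
        = Ring.choose A j * (Ring.choose (A - (j : ℤ)) t * Ring.choose B ((n - j) - t)) := by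
      intro t ht
      have htri := PS_tri A (Nat.le_add_right j t)
      rw [Nat.add_sub_cancel_left] at htri
      have hnn : n - (j + t) = (n - j) - t := by omega
      rw [hnn]
      calc Ring.choose A (j + t) * Ring.choose B ((n - j) - t) * (Nat.choose (j + t) j : ℤ)
          = ((Nat.choose (j + t) j : ℤ) * Ring.choose A (j + t)) * Ring.choose B ((n - j) - t) := by
            ring
        _ = Ring.choose A j * (Ring.choose (A - (j : ℤ)) t * Ring.choose B ((n - j) - t)) := by
            rw [htri]; ring
    rw [Finset.sum_congr rfl h3, ← Finset.mul_sum, PS_vand]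
    congr 1
    have hAB : A - (j : ℤ) + B = ((m + n - j : ℕ) : ℤ) := by
      rw [hA, hB]
      push_cast [Nat.cast_sub (by omega : j ≤ m + n)]
      ring
    rw [hAB, Ring.choose_natCast]
  calc ∑ ℓ ∈ range (n + 1),
        Ring.choose A ℓ * Ring.choose B (n - ℓ) * Ring.choose (x + (ℓ : ℤ)) (m + n)
      = ∑ ℓ ∈ range (n + 1), ∑ j ∈ range (m + n + 1),
          Ring.choose x (m + n - j) *
            (Ring.choose A ℓ * Ring.choose B (n - ℓ) * (Nat.choose ℓ j : ℤ)) := by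
        apply Finset.sum_congr rfl
        intro ℓ _
        rw [hx ℓ, Finset.mul_sum]
        apply Finset.sum_congr rfl
        intro j _
        ring
    _ = ∑ j ∈ range (m + n + 1), Ring.choose x (m + n - j) *
          ∑ ℓ ∈ range (n + 1),
            Ring.choose A ℓ * Ring.choose B (n - ℓ) * (Nat.choose ℓ j : ℤ) := by
        rw [Finset.sum_comm]
        apply Finset.sum_congr rfl
        intro j _
        rw [Finset.mul_sum]
    _ = ∑ j ∈ range (n + 1), Ring.choose x (m + n - j) *
          ∑ ℓ ∈ range (n + 1),
            Ring.choose A ℓ * Ring.choose B (n - ℓ) * (Nat.choose ℓ j : ℤ) := by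
        refine (Finset.sum_subset ?_ ?_).symm
        · intro j hj
          simp only [Finset.mem_range] at hj ⊢
          omega
        · intro j hj hj'
          simp only [Finset.mem_range] at hj hj'
          rw [hJ0 j (by omega), mul_zero]
    _ = ∑ j ∈ range (n + 1), Ring.choose x m *
          (Ring.choose A j * Ring.choose (x - (m : ℤ)) (n - j)) := by
        apply Finset.sum_congr rfl
        intro j hj
        have hjn : j ≤ n := by simp only [Finset.mem_range] at hj; omega
        rw [hJ j hjn]
        have htri := PS_tri x (show n - j ≤ m + n - j by omega)
        have hm : (m + n - j) - (n - j) = m := by omega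
        rw [hm] at htri
        have hrev := PS_rev x (n - j) m
        calc Ring.choose x (m + n - j)
              * (Ring.choose A j * (Nat.choose (m + n - j) (n - j) : ℤ))
            = ((Nat.choose (m + n - j) (n - j) : ℤ) * Ring.choose x (m + n - j))
                * Ring.choose A j := by ring
          _ = (Ring.choose x (n - j) * Ring.choose (x - ((n - j : ℕ) : ℤ)) m)
                * Ring.choose A j := by rw [htri]
          _ = (Ring.choose x m * Ring.choose (x - (m : ℤ)) (n - j))
                * Ring.choose A j := by rw [hrev]
          _ = Ring.choose x m *
                (Ring.choose A j * Ring.choose (x - (m : ℤ)) (n - j)) := by ring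
    _ = Ring.choose x m * Ring.choose y n := by
        rw [← Finset.mul_sum, PS_vand]
        congr 1
        rw [hA]
        ring_nf


end CQSym
end

section
/- For any positive integer n and any subset J ⊆ [n], the fundamental cyclic quasi-symmetric function satisfies F^cyc_{n,J} = Σ_{i ∈ [n]} F_{n, (J−i) ∩ [n−1]}, where J − i is computed cyclically modulo n. -/
open Finset

namespace CQSym

/-! ### Auxiliary lemmas for `cFqsym_eq_sum_Fqsym` -/

lemma mem_support_wt {n : ℕ} (w : Fin n → ℕ+) (i : Fin n) : w i ∈ (wt w).support := by
  simp only [wt, Finsupp.mem_support_iff, Finsupp.coe_finset_sum, Finset.sum_apply]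
  intro h
  have h1 := (Finset.sum_eq_zero_iff.mp h) i (Finset.mem_univ i)
  simp [Finsupp.single_apply] at h1

lemma finite_of_wt {n : ℕ} (d : ℕ+ →₀ ℕ) (Q : (Fin n → ℕ+) → Prop)
    (h : ∀ w, Q w → wt w = d) : Finite {w : Fin n → ℕ+ // Q w} := by
  apply Finite.of_injective
    (fun w : {w : Fin n → ℕ+ // Q w} =>
      (fun i => (⟨w.1 i, by rw [← h w.1 w.2]; exact mem_support_wt w.1 i⟩ :
        {x : ℕ+ // x ∈ d.support})))
  intro a b hab
  ext i
  exact congrArg Subtype.val (congrFun hab i)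

lemma wt_shift {m : ℕ} (w : Fin (m + 1) → ℕ+) (c : Fin (m + 1)) :
    wt (fun a => w (a + c)) = wt w := by
  unfold wt
  exact Fintype.sum_equiv (Equiv.addRight c) _ _ (fun a => rfl)

/-- The index in `[1, n]` associated to a starting position `k : Fin n`. -/
def ik {m : ℕ} (k : Fin (m + 1)) : ℕ := if (k : ℕ) = 0 then m + 1 else (k : ℕ)

lemma ik_mem {m : ℕ} (k : Fin (m + 1)) : ik k ∈ Finset.Icc 1 (m + 1) := by
  have := k.isLt
  unfold ik
  split <;> simp <;> omega

lemma cshift_arith {m : ℕ} (k a : Fin (m + 1)) :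
    (((k + a : Fin (m + 1)) : ℕ) + 1 + (m + 1) - ik k - 1) % (m + 1) + 1
      = (a : ℕ) + 1 := by
  have hk := k.isLt
  have ha := a.isLt
  have hik : 1 ≤ ik k ∧ ik k ≤ m + 1 := by unfold ik; split <;> omega
  have hval : ((k + a : Fin (m + 1)) : ℕ) = ((k : ℕ) + (a : ℕ)) % (m + 1) :=
    Fin.val_add k a
  rw [hval]
  have h1 : ((k : ℕ) + (a : ℕ)) % (m + 1) + 1 + (m + 1) - ik k - 1
      = ((k : ℕ) + (a : ℕ)) % (m + 1) + ((m + 1) - ik k) := by omega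
  rw [h1, Nat.mod_add_mod]
  by_cases h0 : (k : ℕ) = 0
  · have : ik k = m + 1 := by unfold ik; simp [h0]
    rw [this, h0]
    simp [Nat.mod_eq_of_lt ha]
  · have hikk : ik k = (k : ℕ) := by unfold ik; simp [h0]
    rw [hikk]
    have h2 : (k : ℕ) + (a : ℕ) + ((m + 1) - (k : ℕ)) = (a : ℕ) + (m + 1) := by omega
    rw [h2, Nat.add_mod_right, Nat.mod_eq_of_lt ha]

lemma cshift_inj {m : ℕ} (k : Fin (m + 1)) {j j' : ℕ}
    (hj : j ∈ Finset.Icc 1 (m + 1)) (hj' : j' ∈ Finset.Icc 1 (m + 1))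
    (h : (j + (m + 1) - ik k - 1) % (m + 1) = (j' + (m + 1) - ik k - 1) % (m + 1)) :
    j = j' := by
  rw [Finset.mem_Icc] at hj hj'
  have hik : 1 ≤ ik k ∧ ik k ≤ m + 1 := by unfold ik; have := k.isLt; split <;> omega
  have e1 : j + (m + 1) - ik k - 1 = (j - 1) + ((m + 1) - ik k) := by omega
  have e2 : j' + (m + 1) - ik k - 1 = (j' - 1) + ((m + 1) - ik k) := by omega
  rw [e1, e2] at h
  have h2 : (j - 1) % (m + 1) = (j' - 1) % (m + 1) :=
    Nat.ModEq.add_right_cancel' ((m + 1) - ik k) h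
  rw [Nat.mod_eq_of_lt (by omega), Nat.mod_eq_of_lt (by omega)] at h2
  omega

lemma mem_cshift_iff {m : ℕ} (J : Finset ℕ) (hJ : J ⊆ Finset.Icc 1 (m + 1))
    (k a : Fin (m + 1)) :
    (a : ℕ) + 1 ∈ cshift (m + 1) J (ik k) ∩ Finset.Icc 1 m ↔
      ((k + a : Fin (m + 1)) : ℕ) + 1 ∈ J ∧ (a : ℕ) < m := by
  have hb : ((k + a : Fin (m + 1)) : ℕ) + 1 ∈ Finset.Icc 1 (m + 1) :=
    Finset.mem_Icc.mpr ⟨Nat.succ_le_succ (Nat.zero_le _),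
      Nat.succ_le_succ (Nat.lt_succ_iff.mp (k + a).isLt)⟩
  constructor
  · rintro h
    rw [Finset.mem_inter, cshift, Finset.mem_image] at h
    obtain ⟨⟨j, hjJ, hj⟩, h2⟩ := h
    rw [Finset.mem_Icc] at h2
    refine ⟨?_, by omega⟩
    have hj0 : j = ((k + a : Fin (m + 1)) : ℕ) + 1 := by
      apply cshift_inj k (hJ hjJ) hb
      exact Nat.add_right_cancel (hj.trans (cshift_arith k a).symm)
    rwa [← hj0]
  · rintro ⟨hmem, ham⟩
    rw [Finset.mem_inter, cshift, Finset.mem_image]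
    exact ⟨⟨_, hmem, cshift_arith k a⟩, by rw [Finset.mem_Icc]; omega⟩

lemma fin_add_one_ne_zero {m : ℕ} {a : Fin (m + 1)} (h : (a : ℕ) < m) : a + 1 ≠ 0 := by
  have hne : a ≠ Fin.last m := by
    intro hc; rw [hc] at h; simp [Fin.val_last] at h
  have hv : ((a + 1 : Fin (m + 1)) : ℕ) = (a : ℕ) + 1 := by
    rw [Fin.val_add_one, if_neg hne]
  intro hc
  rw [hc] at hv
  simp at hv

lemma fin_add_one_eq_zero {m : ℕ} {a : Fin (m + 1)} (h : ¬ ((a : ℕ) < m)) : a + 1 = 0 := by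
  have : a = Fin.last m := by
    have := a.isLt; apply Fin.ext; simp [Fin.val_last]; omega
  rw [this]
  apply Fin.ext
  simp [Fin.val_add_one]

lemma fwd_cond {m : ℕ} {J : Finset ℕ} (hJ : J ⊆ Finset.Icc 1 (m + 1))
    {d : ℕ+ →₀ ℕ} (k : Fin (m + 1)) (w : Fin (m + 1) → ℕ+)
    (h : Monotone (fun a => w (k + a)) ∧
      (∀ b : Fin (m + 1), (b : ℕ) + 1 ∈ J → b ≠ (finRotate (m + 1)).symm k →
        w b < w (finRotate (m + 1) b)) ∧ wt w = d) :
    Monotone (fun a => w (k + a)) ∧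
      (∀ a : Fin (m + 1),
        (a : ℕ) + 1 ∈ cshift (m + 1) J (ik k) ∩ Finset.Icc 1 m →
        w (k + a) < w (k + finRotate (m + 1) a)) ∧ wt (fun a => w (k + a)) = d := by
  obtain ⟨hmono, hasc, hwt⟩ := h
  refine ⟨hmono, ?_, ?_⟩
  · intro a ha
    rw [mem_cshift_iff J hJ k a] at ha
    obtain ⟨hmem, ham⟩ := ha
    have hne : k + a ≠ (finRotate (m + 1)).symm k := by
      rw [Ne, Equiv.eq_symm_apply, finRotate_succ_apply]
      intro hc
      have h2 : a + 1 = 0 := by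
        have h' : k + (a + 1) = k + 0 := by rw [← add_assoc, hc, add_zero]
        exact add_left_cancel h'
      exact fin_add_one_ne_zero ham h2
    have hb := hasc (k + a) hmem hne
    rw [finRotate_succ_apply] at hb
    rw [finRotate_succ_apply, ← add_assoc]
    exact hb
  · have he : (fun a : Fin (m + 1) => w (k + a)) = fun a => w (a + k) :=
      funext fun a => by rw [add_comm]
    rw [he, wt_shift]
    exact hwt

lemma bwd_cond {m : ℕ} {J : Finset ℕ} (hJ : J ⊆ Finset.Icc 1 (m + 1))
    {d : ℕ+ →₀ ℕ} (k : Fin (m + 1)) (u : Fin (m + 1) → ℕ+)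
    (h : Monotone u ∧
      (∀ a : Fin (m + 1),
        (a : ℕ) + 1 ∈ cshift (m + 1) J (ik k) ∩ Finset.Icc 1 m →
        u a < u (finRotate (m + 1) a)) ∧ wt u = d) :
    Monotone (fun a => u (k + a - k)) ∧
      (∀ b : Fin (m + 1), (b : ℕ) + 1 ∈ J → b ≠ (finRotate (m + 1)).symm k →
        u (b - k) < u (finRotate (m + 1) b - k)) ∧ wt (fun b => u (b - k)) = d := by
  obtain ⟨hmono, hasc, hwt⟩ := h
  refine ⟨?_, ?_, ?_⟩
  · simpa only [add_sub_cancel_left] using hmono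
  · intro b hbJ hbne
    have hba : k + (b - k) = b := add_sub_cancel k b
    have ham : ((b - k : Fin (m + 1)) : ℕ) < m := by
      by_contra hc
      have h0 : (b - k) + 1 = 0 := fin_add_one_eq_zero hc
      apply hbne
      rw [Equiv.eq_symm_apply, finRotate_succ_apply]
      rw [← hba, add_assoc, h0, add_zero]
    have h3 := hasc (b - k) ((mem_cshift_iff J hJ k (b - k)).2
      ⟨by rw [hba]; exact hbJ, ham⟩)
    rw [finRotate_succ_apply] at h3
    rw [finRotate_succ_apply]
    have he : b + 1 - k = (b - k) + 1 := (sub_add_eq_add_sub b k 1).symm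
    rw [he]
    exact h3
  · have he : (fun b : Fin (m + 1) => u (b - k)) = fun b => u (b + -k) :=
      funext fun b => by rw [sub_eq_add_neg]
    rw [he, wt_shift]
    exact hwt

lemma card_fiber_eq {m : ℕ} {J : Finset ℕ} (hJ : J ⊆ Finset.Icc 1 (m + 1))
    (d : ℕ+ →₀ ℕ) (k : Fin (m + 1)) :
    Nat.card {w : Fin (m + 1) → ℕ+ //
        Monotone (fun a => w (k + a)) ∧
        (∀ b : Fin (m + 1), (b : ℕ) + 1 ∈ J → b ≠ (finRotate (m + 1)).symm k →
          w b < w (finRotate (m + 1) b)) ∧ wt w = d}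
      = Nat.card {w : Fin (m + 1) → ℕ+ //
        Monotone w ∧
        (∀ a : Fin (m + 1),
          (a : ℕ) + 1 ∈ cshift (m + 1) J (ik k) ∩ Finset.Icc 1 m →
          w a < w (finRotate (m + 1) a)) ∧ wt w = d} := by
  apply Nat.card_congr
  refine ⟨fun w => ⟨fun a => w.1 (k + a), ?_⟩, fun u => ⟨fun b => u.1 (b - k), ?_⟩, ?_, ?_⟩
  · have h := fwd_cond hJ k w.1 w.2
    refine ⟨h.1, ?_, h.2.2⟩
    intro a ha
    have h2 := h.2.1 a ha
    rw [finRotate_succ_apply] at h2 ⊢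
    exact h2
  · have h := bwd_cond hJ k u.1 u.2
    refine ⟨h.1, ?_, h.2.2⟩
    intro b hb hbne
    exact h.2.1 b hb hbne
  · intro w
    apply Subtype.ext
    funext b
    show w.1 (k + (b - k)) = w.1 b
    rw [add_sub_cancel]
  · intro u
    apply Subtype.ext
    funext a
    show u.1 (k + a - k) = u.1 a
    rw [add_sub_cancel_left]

lemma key_card {m : ℕ} {J : Finset ℕ} (hJ : J ⊆ Finset.Icc 1 (m + 1))
    (d : ℕ+ →₀ ℕ) :
    Nat.card {p : (Fin (m + 1) → ℕ+) × Fin (m + 1) //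
        Monotone (fun i : Fin (m + 1) => p.1 (p.2 + i)) ∧
        (∀ i : Fin (m + 1), (i : ℕ) + 1 ∈ J → i ≠ (finRotate (m + 1)).symm p.2 →
          p.1 i < p.1 (finRotate (m + 1) i)) ∧
        wt p.1 = d}
      = ∑ i ∈ Finset.Icc 1 (m + 1), Nat.card {w : Fin (m + 1) → ℕ+ //
        Monotone w ∧
        (∀ a : Fin (m + 1),
          (a : ℕ) + 1 ∈ cshift (m + 1) J i ∩ Finset.Icc 1 m →
          w a < w (finRotate (m + 1) a)) ∧ wt w = d} := by
  classical
  set T' : Fin (m + 1) → Type := fun k => {w : Fin (m + 1) → ℕ+ //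
    Monotone (fun a => w (k + a)) ∧
    (∀ b : Fin (m + 1), (b : ℕ) + 1 ∈ J → b ≠ (finRotate (m + 1)).symm k →
      w b < w (finRotate (m + 1) b)) ∧ wt w = d} with hT'
  have hfin : ∀ k, Finite (T' k) := fun k =>
    finite_of_wt d _ (fun w hw => hw.2.2)
  letI : ∀ k, Fintype (T' k) := fun k => @Fintype.ofFinite _ (hfin k)
  have hcongr : Nat.card {p : (Fin (m + 1) → ℕ+) × Fin (m + 1) //
        Monotone (fun i : Fin (m + 1) => p.1 (p.2 + i)) ∧
        (∀ i : Fin (m + 1), (i : ℕ) + 1 ∈ J → i ≠ (finRotate (m + 1)).symm p.2 →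
          p.1 i < p.1 (finRotate (m + 1) i)) ∧
        wt p.1 = d} = Nat.card (Σ k : Fin (m + 1), T' k) := by
    apply Nat.card_congr
    exact ⟨fun p => ⟨p.1.2, p.1.1, p.2⟩, fun q => ⟨(q.2.1, q.1), q.2.2⟩,
      fun p => rfl, fun q => rfl⟩
  rw [hcongr, Nat.card_eq_fintype_card, Fintype.card_sigma]
  have hterm : ∀ k : Fin (m + 1), Fintype.card (T' k)
      = Nat.card {w : Fin (m + 1) → ℕ+ //
        Monotone w ∧
        (∀ a : Fin (m + 1),
          (a : ℕ) + 1 ∈ cshift (m + 1) J (ik k) ∩ Finset.Icc 1 m →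
          w a < w (finRotate (m + 1) a)) ∧ wt w = d} := by
    intro k
    rw [← Nat.card_eq_fintype_card]
    exact card_fiber_eq hJ d k
  rw [Finset.sum_congr rfl (fun k _ => hterm k)]
  apply Finset.sum_bij' (i := fun (k : Fin (m + 1)) _ => ik k)
    (j := fun (i : ℕ) hi => (⟨i % (m + 1), Nat.mod_lt _ (Nat.succ_pos m)⟩ : Fin (m + 1)))
  · intro k _
    exact ik_mem k
  · intro i hi
    exact Finset.mem_univ _
  · intro k _
    apply Fin.ext
    have hk := k.isLt
    show ik k % (m + 1) = (k : ℕ)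
    unfold ik
    split <;> rename_i h
    · rw [Nat.mod_self]; omega
    · exact Nat.mod_eq_of_lt (by omega)
  · intro i hi
    rw [Finset.mem_Icc] at hi
    show ik (⟨i % (m + 1), _⟩ : Fin (m + 1)) = i
    unfold ik
    simp only
    split <;> rename_i h
    · rcases Nat.lt_or_ge i (m + 1) with h' | h'
      · rw [Nat.mod_eq_of_lt h'] at h; omega
      · omega
    · rcases Nat.lt_or_ge i (m + 1) with h' | h'
      · exact Nat.mod_eq_of_lt h'
      · exfalso
        apply h
        have : i = m + 1 := by omega
        rw [this, Nat.mod_self]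
  · intro k _
    rfl

/-- From fundamental to cyclic fundamental:
`F^cyc_{n,J} = Σ_{i ∈ [n]} F_{n, (J−i) ∩ [n−1]}`. -/
theorem cFqsym_eq_sum_Fqsym (n : ℕ) (hn : 0 < n) (J : Finset ℕ)
    (hJ : J ⊆ Finset.Icc 1 n) :
    cFqsym n J
      = ∑ i ∈ Finset.Icc 1 n, Fqsym n (cshift n J i ∩ Finset.Icc 1 (n - 1)) := by
  obtain ⟨m, rfl⟩ : ∃ m, n = m + 1 := ⟨n - 1, by omega⟩
  funext d
  change MvPowerSeries.coeff d (cFqsym (m + 1) J) = MvPowerSeries.coeff d (∑ i ∈ Finset.Icc 1 (m + 1), Fqsym (m + 1) (cshift (m + 1) J i ∩ Finset.Icc 1 (m + 1 - 1)))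
  rw [map_sum]
  show ((Nat.card _ : ℕ) : ℤ) = ∑ i ∈ Finset.Icc 1 (m + 1), ((Nat.card _ : ℕ) : ℤ)
  rw [← Nat.cast_sum]
  congr 1
  have := key_card hJ d
  simpa using this

end CQSym
end

section
/- For any positive integer n and any subset J ⊆ [n], one has F^cyc_{n,J} = Σ_{K : J ⊆ K ⊆ [n]} M^cyc_{n,K}, and by inclusion–exclusion M^cyc_{n,J} = Σ_{K : J ⊆ K ⊆ [n]} (−1)^{#(K∖J)} F^cyc_{n,K}. -/
open Finset

namespace CQSym

section Aux

variable {n : ℕ}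

/-- The cyclic descent-type set attached to a pair `(w, k)`. -/
private def kap (p : (Fin n → ℕ+) × Fin n) : Finset ℕ :=
  insert ((((finRotate n).symm p.2 : Fin n) : ℕ) + 1)
    ((Finset.univ.filter fun i : Fin n => p.1 i < p.1 (finRotate n i)).image
      fun i : Fin n => (i : ℕ) + 1)

private lemma mem_kap {p : (Fin n → ℕ+) × Fin n} {j : ℕ} :
    j ∈ kap p ↔ j = (((finRotate n).symm p.2 : Fin n) : ℕ) + 1 ∨
      ∃ i : Fin n, p.1 i < p.1 (finRotate n i) ∧ (i : ℕ) + 1 = j := by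
  simp [kap, Finset.mem_insert, Finset.mem_image, Finset.mem_filter]

private lemma kap_subset (p : (Fin n → ℕ+) × Fin n) : kap p ⊆ Finset.Icc 1 n := by
  intro j hj
  rcases mem_kap.1 hj with h | ⟨i, _, h⟩
  · subst h
    have := (((finRotate n).symm p.2 : Fin n)).isLt
    exact Finset.mem_Icc.2 ⟨Nat.le_add_left _ _, by omega⟩
  · subst h
    have := i.isLt
    exact Finset.mem_Icc.2 ⟨Nat.le_add_left _ _, by omega⟩

/-- The predicate in the definition of `cFqsym`. -/
private def PF (J : Finset ℕ) (d : ℕ+ →₀ ℕ) (p : (Fin n → ℕ+) × Fin n) : Prop :=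
  Monotone (fun i : Fin n => p.1 (p.2 + i)) ∧
  (∀ i : Fin n, (i : ℕ) + 1 ∈ J → i ≠ (finRotate n).symm p.2 →
    p.1 i < p.1 (finRotate n i)) ∧
  wt p.1 = d

/-- The predicate in the definition of `cMqsym`. -/
private def PM (K : Finset ℕ) (d : ℕ+ →₀ ℕ) (p : (Fin n → ℕ+) × Fin n) : Prop :=
  Monotone (fun i : Fin n => p.1 (p.2 + i)) ∧
  (((finRotate n).symm p.2 : Fin n) : ℕ) + 1 ∈ K ∧
  (∀ i : Fin n, i ≠ (finRotate n).symm p.2 →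
    (((i : ℕ) + 1 ∈ K) ↔ p.1 i < p.1 (finRotate n i))) ∧
  wt p.1 = d

private lemma pm_kap {d : ℕ+ →₀ ℕ} {p : (Fin n → ℕ+) × Fin n}
    (h1 : Monotone (fun i : Fin n => p.1 (p.2 + i))) (h3 : wt p.1 = d) :
    PM (kap p) d p := by
  refine ⟨h1, Finset.mem_insert_self _ _, fun i hi => ⟨fun hmem => ?_, fun hasc => ?_⟩, h3⟩
  · rcases mem_kap.1 hmem with h | ⟨i', hasc, hval⟩
    · exact absurd (Fin.ext (Nat.succ_injective h)) hi
    · rwa [show i' = i from Fin.ext (Nat.succ_injective hval)] at hasc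
  · exact mem_kap.2 (Or.inr ⟨i, hasc, rfl⟩)

private lemma kap_eq {K : Finset ℕ} {d : ℕ+ →₀ ℕ} {p : (Fin n → ℕ+) × Fin n}
    (hK : K ⊆ Finset.Icc 1 n) (h : PM K d p) : K = kap p := by
  obtain ⟨-, hb, hiff, -⟩ := h
  ext j
  constructor
  · intro hj
    obtain ⟨hj1, hjn⟩ := Finset.mem_Icc.1 (hK hj)
    have hlt : j - 1 < n := by omega
    set i : Fin n := ⟨j - 1, hlt⟩ with hi
    have hij : (i : ℕ) + 1 = j := by simp only [hi]; omega
    by_cases hib : i = (finRotate n).symm p.2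
    · exact mem_kap.2 (Or.inl (by rw [← hij, hib]))
    · exact mem_kap.2 (Or.inr ⟨i, (hiff i hib).1 (by rwa [hij]), hij⟩)
  · intro hj
    rcases mem_kap.1 hj with h | ⟨i, hasc, hval⟩
    · exact h ▸ hb
    · by_cases hib : i = (finRotate n).symm p.2
      · rw [← hval, hib]; exact hb
      · rw [← hval]; exact (hiff i hib).2 hasc

private lemma pf_iff {J : Finset ℕ} (hJ : J ⊆ Finset.Icc 1 n) {d : ℕ+ →₀ ℕ}
    {p : (Fin n → ℕ+) × Fin n} :
    PF J d p ↔ (Monotone (fun i : Fin n => p.1 (p.2 + i)) ∧ wt p.1 = d ∧ J ⊆ kap p) := by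
  constructor
  · rintro ⟨h1, h2, h3⟩
    refine ⟨h1, h3, fun j hj => ?_⟩
    obtain ⟨hj1, hjn⟩ := Finset.mem_Icc.1 (hJ hj)
    have hlt : j - 1 < n := by omega
    set i : Fin n := ⟨j - 1, hlt⟩ with hi
    have hij : (i : ℕ) + 1 = j := by simp only [hi]; omega
    by_cases hib : i = (finRotate n).symm p.2
    · exact mem_kap.2 (Or.inl (by rw [← hij, hib]))
    · exact mem_kap.2 (Or.inr ⟨i, h2 i (by rwa [hij]) hib, hij⟩)
  · rintro ⟨h1, h3, hsub⟩
    refine ⟨h1, fun i hi hib => ?_, h3⟩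
    rcases mem_kap.1 (hsub hi) with h | ⟨i', hasc, hval⟩
    · exact absurd (Fin.ext (Nat.succ_injective h)) hib
    · rwa [show i' = i from Fin.ext (Nat.succ_injective hval)] at hasc

private lemma finite_wt (d : ℕ+ →₀ ℕ) : Finite {w : Fin n → ℕ+ // wt w = d} := by
  classical
  have key : ∀ (w : Fin n → ℕ+), wt w = d → ∀ i, w i ∈ d.support := by
    intro w hw i
    rw [Finsupp.mem_support_iff, ← hw]
    intro hzero
    have happ : (wt w) (w i) = ∑ j : Fin n, (Finsupp.single (w j) 1 : ℕ+ →₀ ℕ) (w i) := by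
      rw [wt]; exact Finsupp.finset_sum_apply _ _ _
    rw [happ] at hzero
    have := (Finset.sum_eq_zero_iff.1 hzero) i (Finset.mem_univ i)
    rw [Finsupp.single_eq_same] at this
    exact one_ne_zero this
  refine Finite.of_injective
    (fun w : {w : Fin n → ℕ+ // wt w = d} =>
      (fun i => (⟨w.1 i, key w.1 w.2 i⟩ : {x // x ∈ d.support}))) ?_
  intro w w' h
  refine Subtype.ext (funext fun i => ?_)
  exact congrArg Subtype.val (congrFun h i)

private lemma finite_aux (Q : ((Fin n → ℕ+) × Fin n) → Prop) (d : ℕ+ →₀ ℕ)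
    (h : ∀ p, Q p → wt p.1 = d) : Finite {p // Q p} := by
  have := finite_wt (n := n) d
  refine Finite.of_injective
    (fun p : {p // Q p} =>
      ((⟨p.1.1, h p.1 p.2⟩ : {w : Fin n → ℕ+ // wt w = d}), p.1.2)) ?_
  rintro ⟨⟨w, k⟩, hp⟩ ⟨⟨w', k'⟩, hp'⟩ hh
  simp only [Prod.mk.injEq, Subtype.mk.injEq] at hh
  exact Subtype.ext (Prod.ext hh.1 hh.2)

private lemma nat_card_sigma {ι : Type*} [Fintype ι] (f : ι → Type*) [∀ i, Finite (f i)] :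
    Nat.card (Σ i, f i) = ∑ i, Nat.card (f i) := by
  letI : ∀ i, Fintype (f i) := fun i => Fintype.ofFinite _
  simp [Nat.card_eq_fintype_card]

private lemma coeff_key (J : Finset ℕ) (hJ : J ⊆ Finset.Icc 1 n) (d : ℕ+ →₀ ℕ) :
    (Nat.card {p : (Fin n → ℕ+) × Fin n // PF J d p}) =
      ∑ K ∈ (Finset.Icc 1 n).powerset.filter (fun K => J ⊆ K),
        Nat.card {p : (Fin n → ℕ+) × Fin n // PM K d p} := by
  classical
  set S := (Finset.Icc 1 n).powerset.filter (fun K => J ⊆ K) with hS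
  have hfin : Finite {p : (Fin n → ℕ+) × Fin n // PF J d p} :=
    finite_aux _ d (fun p hp => hp.2.2)
  have hfinM : ∀ K, Finite {p : (Fin n → ℕ+) × Fin n // PM K d p} :=
    fun K => finite_aux _ d (fun p hp => hp.2.2.2)
  have hmem : ∀ p : {p : (Fin n → ℕ+) × Fin n // PF J d p}, kap p.1 ∈ S := by
    intro p
    rw [hS, Finset.mem_filter, Finset.mem_powerset]
    exact ⟨kap_subset _, ((pf_iff hJ).1 p.2).2.2⟩
  let f : {p : (Fin n → ℕ+) × Fin n // PF J d p} → {K // K ∈ S} :=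
    fun p => ⟨kap p.1, hmem p⟩
  have e1 := Nat.card_congr (Equiv.sigmaFiberEquiv f).symm
  rw [e1, nat_card_sigma]
  rw [← Finset.sum_coe_sort S (fun K => Nat.card {p : (Fin n → ℕ+) × Fin n // PM K d p})]
  refine Finset.sum_congr rfl fun K _ => ?_
  have hK : K.1 ⊆ Finset.Icc 1 n ∧ J ⊆ K.1 := by
    have h3 := Finset.mem_filter.1 K.2
    exact ⟨Finset.mem_powerset.1 h3.1, h3.2⟩
  refine Nat.card_congr ⟨fun a => ⟨a.1.1, ?_⟩, fun q => ⟨⟨q.1, ?_⟩, ?_⟩, ?_, ?_⟩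
  · have hk : kap a.1.1 = K.1 := congrArg Subtype.val a.2
    have hpm := pm_kap (d := d) a.1.2.1 a.1.2.2.2
    rwa [hk] at hpm
  · have hkap : K.1 = kap q.1 := kap_eq hK.1 q.2
    refine (pf_iff hJ).2 ⟨q.2.1, q.2.2.2.2, ?_⟩
    rw [← hkap]; exact hK.2
  · exact Subtype.ext (kap_eq hK.1 q.2).symm
  · intro a; exact Subtype.ext (Subtype.ext rfl)
  · intro q; exact Subtype.ext rfl

private lemma sum_apply' (s : Finset (Finset ℕ)) (f : Finset ℕ → MvPowerSeries ℕ+ ℤ)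
    (d : ℕ+ →₀ ℕ) : (∑ K ∈ s, f K) d = ∑ K ∈ s, f K d :=
  map_sum (MvPowerSeries.coeff d) f s

private lemma cFqsym_eq_sum (J : Finset ℕ) (hJ : J ⊆ Finset.Icc 1 n) :
    cFqsym n J = ∑ K ∈ (Finset.Icc 1 n).powerset.filter (fun K => J ⊆ K), cMqsym n K := by
  funext d
  rw [sum_apply']
  show ((Nat.card {p : (Fin n → ℕ+) × Fin n // PF J d p} : ℤ)) =
    ∑ K ∈ (Finset.Icc 1 n).powerset.filter (fun K => J ⊆ K),
      ((Nat.card {p : (Fin n → ℕ+) × Fin n // PM K d p} : ℤ))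
  exact_mod_cast congrArg (Nat.cast : ℕ → ℤ) (coeff_key J hJ d)

private lemma alt_sum {J L : Finset ℕ} (hJL : J ⊆ L) :
    ∑ K ∈ Finset.Icc J L, (-1 : ℤ) ^ (K \ J).card = if L = J then 1 else 0 := by
  classical
  have hbij : ∑ K ∈ Finset.Icc J L, (-1 : ℤ) ^ (K \ J).card =
      ∑ A ∈ (L \ J).powerset, (-1 : ℤ) ^ A.card := by
    refine Finset.sum_bij' (fun K _ => K \ J) (fun A _ => A ∪ J) ?_ ?_ ?_ ?_ ?_
    · intro K hK
      rw [Finset.mem_Icc] at hK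
      exact Finset.mem_powerset.2 (Finset.sdiff_subset_sdiff hK.2 le_rfl)
    · intro A hA
      rw [Finset.mem_powerset] at hA
      rw [Finset.mem_Icc]
      exact ⟨Finset.subset_union_right, Finset.union_subset
        (hA.trans (Finset.sdiff_subset)) hJL⟩
    · intro K hK
      rw [Finset.mem_Icc] at hK
      exact Finset.sdiff_union_of_subset hK.1
    · intro A hA
      rw [Finset.mem_powerset] at hA
      have hdisj : Disjoint A J := Finset.disjoint_of_subset_left hA Finset.sdiff_disjoint
      show (A ∪ J) \ J = A
      rw [Finset.union_sdiff_distrib, Finset.sdiff_eq_self_of_disjoint hdisj,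
        Finset.sdiff_self, Finset.union_empty]
    · intro K _; rfl
  rw [hbij, Finset.sum_powerset_neg_one_pow_card]
  simp only [Finset.sdiff_eq_empty_iff_subset]
  exact if_congr ⟨fun h => le_antisymm h hJL, fun h => h ▸ le_rfl⟩ rfl rfl

end Aux

/-- Fundamental vs. monomial cyclic quasi-symmetric functions:
`F^cyc_{n,J} = Σ_{K ⊇ J} M^cyc_{n,K}` and, by inclusion–exclusion,
`M^cyc_{n,J} = Σ_{K ⊇ J} (−1)^{#(K∖J)} F^cyc_{n,K}`. -/
theorem cFqsym_cMqsym_inversion (n : ℕ) (hn : 0 < n) (J : Finset ℕ)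
    (hJ : J ⊆ Finset.Icc 1 n) :
    cFqsym n J
        = ∑ K ∈ (Finset.Icc 1 n).powerset.filter (fun K => J ⊆ K), cMqsym n K
    ∧ cMqsym n J
        = ∑ K ∈ (Finset.Icc 1 n).powerset.filter (fun K => J ⊆ K),
            ((-1 : ℤ) ^ (K \ J).card) • cFqsym n K := by
  classical
  refine ⟨cFqsym_eq_sum J hJ, ?_⟩
  have step1 : ∑ K ∈ (Finset.Icc 1 n).powerset.filter (fun K => J ⊆ K),
      ((-1 : ℤ) ^ (K \ J).card) • cFqsym n K
      = ∑ K ∈ (Finset.Icc 1 n).powerset.filter (fun K => J ⊆ K),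
          ∑ L ∈ (Finset.Icc 1 n).powerset.filter (fun L => K ⊆ L),
            ((-1 : ℤ) ^ (K \ J).card) • cMqsym n L := by
    refine Finset.sum_congr rfl fun K hK => ?_
    rw [Finset.mem_filter, Finset.mem_powerset] at hK
    rw [cFqsym_eq_sum K hK.1, Finset.smul_sum]
  have step2 : ∑ K ∈ (Finset.Icc 1 n).powerset.filter (fun K => J ⊆ K),
      ∑ L ∈ (Finset.Icc 1 n).powerset.filter (fun L => K ⊆ L),
        ((-1 : ℤ) ^ (K \ J).card) • cMqsym n L
      = ∑ L ∈ (Finset.Icc 1 n).powerset.filter (fun L => J ⊆ L),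
          ∑ K ∈ Finset.Icc J L, ((-1 : ℤ) ^ (K \ J).card) • cMqsym n L := by
    refine Finset.sum_comm' ?_
    intro K L
    simp only [Finset.mem_filter, Finset.mem_powerset, Finset.mem_Icc, Finset.le_iff_subset]
    constructor
    · rintro ⟨⟨hK1, hK2⟩, hL1, hL2⟩
      exact ⟨⟨hK2, hL2⟩, hL1, hK2.trans hL2⟩
    · rintro ⟨⟨hK1, hK2⟩, hL1, hL2⟩
      exact ⟨⟨hK2.trans hL1, hK1⟩, hL1, hK2⟩
  rw [step1, step2]
  have step3 : ∀ L ∈ (Finset.Icc 1 n).powerset.filter (fun L => J ⊆ L),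
      ∑ K ∈ Finset.Icc J L, ((-1 : ℤ) ^ (K \ J).card) • cMqsym n L
      = (if L = J then (1 : ℤ) else 0) • cMqsym n L := by
    intro L hL
    rw [Finset.mem_filter] at hL
    rw [← Finset.sum_smul, alt_sum hL.2]
  rw [Finset.sum_congr rfl step3]
  simp only [ite_smul, one_smul, zero_smul]
  have hJmem : J ∈ (Finset.Icc 1 n).powerset.filter (fun L => J ⊆ L) :=
    Finset.mem_filter.2 ⟨Finset.mem_powerset.2 hJ, Finset.Subset.refl J⟩
  rw [Finset.sum_ite_eq' _ J (fun L => cMqsym n L), if_pos hJmem]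

end CQSym
end

section
/- The map Ψ sending each monomial x_{i_1}^{m_1}···x_{i_k}^{m_k} (with i_1 < ... < i_k) to q^{i_k}, and 1 to 1, extended linearly, is a ring homomorphism from bounded-degree power series in x_1, x_2, ... to the ring Z[[q]]_⊙ whose underlying additive group is Z[[q]] and whose multiplication is determined by q^i ⊙ q^j = q^{max(i,j)}. -/
open Finset

namespace CQSym

noncomputable def mu (d : ℕ+ →₀ ℕ) : ℕ := d.support.sup fun m => (m : ℕ)

def deg (d : ℕ+ →₀ ℕ) : ℕ := d.sum fun _ e => e

lemma support_add_eq' (a b : ℕ+ →₀ ℕ) : (a + b).support = a.support ∪ b.support := by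
  ext x; simp only [Finsupp.mem_support_iff, Finsupp.add_apply, Finset.mem_union]; omega

lemma mu_add (a b : ℕ+ →₀ ℕ) : mu (a + b) = max (mu a) (mu b) := by
  rw [mu, support_add_eq', Finset.sup_union]; rfl

lemma mu_eq_zero {d : ℕ+ →₀ ℕ} : mu d = 0 ↔ d = 0 := by
  constructor
  · intro h
    ext x
    simp only [Finsupp.coe_zero, Pi.zero_apply]
    by_contra hx
    have hx' : x ∈ d.support := Finsupp.mem_support_iff.2 hx
    have h2 : (x : ℕ) ≤ mu d := Finset.le_sup (f := fun m : ℕ+ => (m : ℕ)) hx'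
    have h3 := x.pos
    omega
  · rintro rfl; simp [mu]

lemma deg_add (a b : ℕ+ →₀ ℕ) : deg (a + b) = deg a + deg b :=
  Finsupp.sum_add_index' (fun _ => rfl) (fun _ _ _ => rfl)

lemma deg_zero : deg 0 = 0 := rfl

lemma apply_le_deg (d : ℕ+ →₀ ℕ) (x : ℕ+) : d x ≤ deg d := by
  by_cases hx : x ∈ d.support
  · exact Finset.single_le_sum (f := fun i => d i) (fun _ _ => Nat.zero_le _) hx
  · simp [Finsupp.notMem_support_iff.mp hx]

lemma apply_eq_zero_of_mu_lt {d : ℕ+ →₀ ℕ} {x : ℕ+} (h : mu d < (x : ℕ)) : d x = 0 := by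
  by_contra hx
  have hx' : x ∈ d.support := Finsupp.mem_support_iff.2 hx
  have h2 : (x : ℕ) ≤ mu d := Finset.le_sup (f := fun m : ℕ+ => (m : ℕ)) hx'
  omega

lemma finite_bdd (N D : ℕ) : {d : ℕ+ →₀ ℕ | mu d ≤ N ∧ deg d ≤ D}.Finite := by
  rw [← Set.finite_coe_iff]
  apply Finite.of_injective (f := fun d : {d : ℕ+ →₀ ℕ | mu d ≤ N ∧ deg d ≤ D} =>
    fun i : Fin N => (⟨d.1 ⟨i + 1, Nat.succ_pos _⟩,
      Nat.lt_succ_of_le (le_trans (apply_le_deg _ _) d.2.2)⟩ : Fin (D + 1)))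
  intro a b h
  apply Subtype.ext
  ext x
  by_cases hx : (x : ℕ) ≤ N
  · have hx1 : (x : ℕ) - 1 < N := by have := x.pos; omega
    have h2 := congrFun h ⟨(x : ℕ) - 1, hx1⟩
    simp only [Fin.mk.injEq] at h2
    have hx2 : (⟨(x : ℕ) - 1 + 1, Nat.succ_pos _⟩ : ℕ+) = x := by
      apply Subtype.ext
      show (x : ℕ) - 1 + 1 = (x : ℕ)
      have := x.pos; omega
    rwa [hx2] at h2
  · rw [apply_eq_zero_of_mu_lt (lt_of_le_of_lt a.2.1 (by omega)),
        apply_eq_zero_of_mu_lt (lt_of_le_of_lt b.2.1 (by omega))]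

noncomputable def Qle (D r : ℕ) : Finset (ℕ+ →₀ ℕ) := (finite_bdd r D).toFinset

lemma mem_Qle {D r : ℕ} {d : ℕ+ →₀ ℕ} : d ∈ Qle D r ↔ mu d ≤ r ∧ deg d ≤ D := by
  simp [Qle]

noncomputable def Q (D r : ℕ) : Finset (ℕ+ →₀ ℕ) := (Qle D r).filter fun d => mu d = r

lemma mem_Q {D r : ℕ} {d : ℕ+ →₀ ℕ} : d ∈ Q D r ↔ mu d = r ∧ deg d ≤ D := by
  simp only [Q, Finset.mem_filter, mem_Qle]; omega

noncomputable def Qlt (D r : ℕ) : Finset (ℕ+ →₀ ℕ) := (Qle D r).filter fun d => mu d < r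

lemma mem_Qlt {D r : ℕ} {d : ℕ+ →₀ ℕ} : d ∈ Qlt D r ↔ mu d < r ∧ deg d ≤ D := by
  simp only [Qlt, Finset.mem_filter, mem_Qle]; omega

lemma psi_coeff {f : MvPowerSeries ℕ+ ℤ} {D : ℕ}
    (hD : ∀ d : ℕ+ →₀ ℕ, D < deg d → MvPowerSeries.coeff d f = 0) (r : ℕ) :
    PowerSeries.coeff r (psi f) = ∑ d ∈ Q D r, MvPowerSeries.coeff d f := by
  rw [psi, PowerSeries.coeff_mk]
  rcases eq_or_ne r 0 with rfl | hr
  · rw [if_pos rfl]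
    have hQ : Q D 0 = {0} := by
      ext d
      simp only [mem_Q, mu_eq_zero, Finset.mem_singleton]
      constructor
      · exact fun h => h.1
      · rintro rfl; exact ⟨rfl, by rw [deg_zero]; omega⟩
    rw [hQ, Finset.sum_singleton]
  · rw [if_neg hr]
    apply finsum_mem_eq_sum_of_inter_support_eq
    ext d
    simp only [Set.mem_inter_iff, Set.mem_setOf_eq, Function.mem_support, Finset.mem_coe,
      mem_Q]
    constructor
    · rintro ⟨⟨m, hm, hmax, hmr⟩, hne⟩
      refine ⟨⟨le_antisymm (Finset.sup_le fun m' hm' => ?_) (hmr ▸ Finset.le_sup hm), ?_⟩, hne⟩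
      · exact hmr ▸ (PNat.coe_le_coe _ _).2 (hmax m' hm')
      · by_contra hdeg
        exact hne (hD d (by omega))
    · rintro ⟨⟨hmu, _⟩, hne⟩
      refine ⟨?_, hne⟩
      have hd0 : d ≠ 0 := by rintro rfl; simp [mu] at hmu; exact hr hmu.symm
      have hsupp : d.support.Nonempty := Finsupp.support_nonempty_iff.2 hd0
      obtain ⟨m, hm, hsup⟩ := Finset.exists_mem_eq_sup d.support hsupp (fun m : ℕ+ => (m : ℕ))
      refine ⟨m, hm, fun m' hm' => ?_, by rw [← hmu, mu, hsup]⟩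
      have h2 : (m' : ℕ) ≤ mu d := Finset.le_sup (f := fun m : ℕ+ => (m : ℕ)) hm'
      have h3 : mu d = (m : ℕ) := hsup
      exact (PNat.coe_le_coe _ _).1 (by omega)


/-- `Ψ` is a ring homomorphism from bounded-degree power series to
`ℤ[[q]]_⊙`: it is additive, multiplicative (with respect to `⊙`) and unital. -/
theorem psi_ring_hom (f g : MvPowerSeries ℕ+ ℤ)
    (hf : BoundedDeg f) (hg : BoundedDeg g) :
    psi (f + g) = psi f + psi g
    ∧ psi (f * g) = odot (psi f) (psi g)
    ∧ psi 1 = 1 := by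
  classical
  obtain ⟨D1, hf1⟩ := hf
  obtain ⟨D2, hg1⟩ := hg
  set D := max D1 D2 with hDdef
  have hfD : ∀ d : ℕ+ →₀ ℕ, D < deg d → MvPowerSeries.coeff d f = 0 :=
    fun d h => hf1 d (lt_of_le_of_lt (le_max_left _ _) h)
  have hgD : ∀ d : ℕ+ →₀ ℕ, D < deg d → MvPowerSeries.coeff d g = 0 :=
    fun d h => hg1 d (lt_of_le_of_lt (le_max_right _ _) h)
  refine ⟨?_, ?_, ?_⟩
  · -- additivity
    have hadd : ∀ d : ℕ+ →₀ ℕ, D < deg d → MvPowerSeries.coeff d (f + g) = 0 := by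
      intro d h; rw [map_add, hfD d h, hgD d h, add_zero]
    ext r
    rw [map_add, psi_coeff hadd r, psi_coeff hfD r, psi_coeff hgD r,
      ← Finset.sum_add_distrib]
    exact Finset.sum_congr rfl fun d _ => map_add _ _ _
  · -- multiplicativity
    have hfg : ∀ d : ℕ+ →₀ ℕ, D + D < deg d → MvPowerSeries.coeff d (f * g) = 0 := by
      intro d hd
      rw [MvPowerSeries.coeff_mul]
      apply Finset.sum_eq_zero
      rintro ⟨p1, p2⟩ hp
      rw [Finset.HasAntidiagonal.mem_antidiagonal] at hp
      have hdeg : deg p1 + deg p2 = deg d := by rw [← hp, deg_add]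
      rcases (by omega : D < deg p1 ∨ D < deg p2) with h | h
      · rw [hfD _ h, zero_mul]
      · rw [hgD _ h, mul_zero]
    ext r
    rw [psi_coeff hfg r, odot, PowerSeries.coeff_mk]
    simp only [psi_coeff hfD, psi_coeff hgD]
    -- collapse the range sums
    have hfiberB : ∑ s ∈ Finset.range (r + 1), ∑ d ∈ Q D s, MvPowerSeries.coeff d g
        = ∑ d ∈ Qle D r, MvPowerSeries.coeff d g := by
      rw [← Finset.sum_fiberwise_of_maps_to (g := mu) (t := Finset.range (r + 1))
        (fun d hd => Finset.mem_range.2 (by have := (mem_Qle.1 hd).1; omega)) _]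
      apply Finset.sum_congr rfl
      intro s hs
      rw [Finset.mem_range] at hs
      apply Finset.sum_congr _ (fun _ _ => rfl)
      ext d
      simp only [Finset.mem_filter, mem_Qle, mem_Q]
      omega
    have hfiberA : ∑ s ∈ Finset.range r, ∑ d ∈ Q D s, MvPowerSeries.coeff d f
        = ∑ d ∈ Qlt D r, MvPowerSeries.coeff d f := by
      rw [← Finset.sum_fiberwise_of_maps_to (g := mu) (t := Finset.range r)
        (fun d hd => Finset.mem_range.2 (mem_Qlt.1 hd).1) _]
      apply Finset.sum_congr rfl
      intro s hs
      rw [Finset.mem_range] at hs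
      apply Finset.sum_congr _ (fun _ _ => rfl)
      ext d
      simp only [Finset.mem_filter, mem_Qlt, mem_Q]
      omega
    rw [hfiberB, hfiberA]
    -- main combinatorial identity
    have hcoeffmul : ∀ d ∈ Q (D + D) r, MvPowerSeries.coeff d (f * g) =
        ∑ p ∈ Finset.HasAntidiagonal.antidiagonal d,
          MvPowerSeries.coeff p.1 f * MvPowerSeries.coeff p.2 g :=
      fun d _ => MvPowerSeries.coeff_mul d f g
    rw [Finset.sum_congr rfl hcoeffmul]
    rw [← Finset.sum_biUnion (by
      intro a _ b _ hab
      apply Finset.disjoint_left.2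
      intro p hpa hpb
      rw [Finset.HasAntidiagonal.mem_antidiagonal] at hpa hpb
      exact hab (hpa ▸ hpb))]
    set P : Finset ((ℕ+ →₀ ℕ) × (ℕ+ →₀ ℕ)) :=
      (Q D r ×ˢ Qle D r) ∪ (Qlt D r ×ˢ Q D r) with hPdef
    have hsub : P ⊆ (Q (D + D) r).biUnion Finset.HasAntidiagonal.antidiagonal := by
      intro p hp
      rw [Finset.mem_biUnion]
      refine ⟨p.1 + p.2, ?_, Finset.HasAntidiagonal.mem_antidiagonal.2 rfl⟩
      rw [mem_Q, mu_add, deg_add]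
      rcases Finset.mem_union.1 hp with h | h <;>
        rw [Finset.mem_product] at h
      · have h1 := mem_Q.1 h.1
        have h2 := mem_Qle.1 h.2
        omega
      · have h1 := mem_Qlt.1 h.1
        have h2 := mem_Q.1 h.2
        omega
    rw [← Finset.sum_subset hsub (by
      intro p hp hnp
      rw [Finset.mem_biUnion] at hp
      obtain ⟨d, hd, hpd⟩ := hp
      rw [Finset.HasAntidiagonal.mem_antidiagonal] at hpd
      rw [mem_Q] at hd
      have hmu : max (mu p.1) (mu p.2) = r := by rw [← mu_add, hpd]; exact hd.1
      by_contra hne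
      rcases mul_ne_zero_iff.1 hne with ⟨hA, hB⟩
      have hdf : deg p.1 ≤ D := by by_contra h; exact hA (hfD _ (by omega))
      have hdg : deg p.2 ≤ D := by by_contra h; exact hB (hgD _ (by omega))
      apply hnp
      rw [hPdef, Finset.mem_union, Finset.mem_product, Finset.mem_product,
        mem_Q, mem_Qle, mem_Qlt, mem_Q]
      omega)]
    have hdisj : Disjoint (Q D r ×ˢ Qle D r) (Qlt D r ×ˢ Q D r) := by
      apply Finset.disjoint_left.2
      intro p hp1 hp2
      rw [Finset.mem_product] at hp1 hp2
      have h1 := mem_Q.1 hp1.1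
      have h2 := mem_Qlt.1 hp2.1
      omega
    rw [hPdef, Finset.sum_union hdisj, Finset.sum_product, Finset.sum_product,
      Finset.sum_mul_sum, Finset.sum_mul_sum]
  · -- unit
    have h1 : ∀ d : ℕ+ →₀ ℕ, 0 < deg d → MvPowerSeries.coeff d (1 : MvPowerSeries ℕ+ ℤ) = 0 := by
      intro d hd
      rw [MvPowerSeries.coeff_one]
      rw [if_neg]
      intro h
      rw [h, deg_zero] at hd
      omega
    ext r
    rw [psi_coeff h1 r, PowerSeries.coeff_one]
    rcases eq_or_ne r 0 with rfl | hr
    · have hQ : Q 0 0 = {0} := by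
        ext d
        simp only [mem_Q, mu_eq_zero, Finset.mem_singleton]
        constructor
        · exact fun h => h.1
        · rintro rfl; exact ⟨rfl, le_of_eq deg_zero⟩
      rw [hQ, Finset.sum_singleton, if_pos rfl, MvPowerSeries.coeff_one, if_pos rfl]
    · rw [if_neg hr]
      apply Finset.sum_eq_zero
      intro d hd
      rw [MvPowerSeries.coeff_one, if_neg]
      intro h
      rw [mem_Q, h] at hd
      exact hr ((mu_eq_zero.2 rfl) ▸ hd.1.symm)


end CQSym
end
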